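/- arXiv:1704.07546 — 6 statements merged into one kernel-verified Lean document; each statement's English description precedes it below -/
import Mathlib

section
/- In any stable matching M' of the reduced HR instance G', for every hospital h of the original HRLQ instance, the total number of non-dummy residents matched across all level copies h^0,...,h^{ℓ−1} of h is at most q^+(h). -/
open Finset

attribute [local instance] Classical.propDecidable

namespace HRLQ

variable {R H : Type}

/-- Number of levels in the reduced HR instance (`T = 2` for `G'`, `T = |R|` for `G''`). -/
def ell (H : Type) [Fintype H] (T : ℕ) (qm : H → ℕ) : ℕ := T + ∑ h, qm h

/-- Dummy residents of the reduced instance: a dummy `⟨h, s, i⟩` is the `i`-th level-`s`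
dummy resident corresponding to hospital `h`; levels run over `0,…,ℓ-2`, there are
`q⁺(h)` dummies at levels `< T` and `q⁻(h)` dummies at levels `≥ T`. -/
def Dummy (H : Type) [Fintype H] (T : ℕ) (qp qm : H → ℕ) : Type :=
  {x : Σ h : H, Fin (ell H T qm) × Fin (qp h) //
    x.2.1.val ≤ ell H T qm - 2 ∧ (T ≤ x.2.1.val → x.2.2.val < qm x.1)}

noncomputable instance [Fintype H] (T : ℕ) (qp qm : H → ℕ) : Fintype (Dummy H T qp qm) := by
  classical
  unfold Dummy
  infer_instance

variable [Fintype H]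

def Dummy.h {T : ℕ} {qp qm : H → ℕ} (d : Dummy H T qp qm) : H := d.1.1
def Dummy.s {T : ℕ} {qp qm : H → ℕ} (d : Dummy H T qp qm) : ℕ := d.1.2.1.val
def Dummy.i {T : ℕ} {qp qm : H → ℕ} (d : Dummy H T qp qm) : ℕ := d.1.2.2.val

/-- Residents of the reduced instance: original residents plus dummies. -/
def Res (R H : Type) [Fintype H] (T : ℕ) (qp qm : H → ℕ) : Type := R ⊕ Dummy H T qp qm

/-- Hospitals of the reduced instance: level copies `h^s`, `s ∈ {0,…,ℓ-1}`. -/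
def Hos (H : Type) [Fintype H] (T : ℕ) (qm : H → ℕ) : Type := H × Fin (ell H T qm)

noncomputable instance [Fintype R] (T : ℕ) (qp qm : H → ℕ) : Fintype (Res R H T qp qm) := by
  unfold Res; infer_instance

instance (T : ℕ) (qm : H → ℕ) : Fintype (Hos H T qm) := by
  unfold Hos; infer_instance

/-- Capacity of the level copy `h^s`. -/
def cap (T : ℕ) (qp qm : H → ℕ) (hs : Hos H T qm) : ℕ :=
  if hs.2.val < T then qp hs.1 else qm hs.1

/-- Acceptability (edges) in the reduced instance. A level-`s` dummy of `h` is acceptable to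
`h^s` and `h^{s+1}`, except that the first `q⁺(h) - q⁻(h)` dummies at level `T-1` only list
`h^{T-1}`.  An original resident `r` is acceptable to every copy of each hospital on its list. -/
def edge (T : ℕ) (qp qm : H → ℕ) (E : R → H → Prop) :
    Res R H T qp qm → Hos H T qm → Prop
  | Sum.inl r, hs => E r hs.1
  | Sum.inr d, hs => d.h = hs.1 ∧
      (hs.2.val = d.s ∨
        (hs.2.val = d.s + 1 ∧ ¬(d.s = T - 1 ∧ d.i < qp hs.1 - qm hs.1)))

/-- Rank (smaller = better) that a dummy assigns to hospital copies. -/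
noncomputable def dkey {T : ℕ} {qp qm : H → ℕ} (d : Dummy H T qp qm) (a : Hos H T qm) : ℕ :=
  if a.1 = d.h ∧ a.2.val = d.s then 0
  else if a.1 = d.h ∧ a.2.val = d.s + 1 then 1 else 2

/-- Preferences of residents of the reduced instance over hospital copies:
an original resident prefers higher level copies, and within a level follows its original
ranking `rankR` (smaller rank = more preferred); a level-`s` dummy of `h` has list `⟨h^s, h^{s+1}⟩`. -/
def prefRes (T : ℕ) (qp qm : H → ℕ) (rankR : R → H → ℕ) :
    Res R H T qp qm → Hos H T qm → Hos H T qm → Prop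
  | Sum.inl r, a, b => b.2.val < a.2.val ∨ (a.2.val = b.2.val ∧ rankR r a.1 < rankR r b.1)
  | Sum.inr d, a, b => dkey d a < dkey d b

/-- Preference class of a resident in the list of `h^s`: level-`(s-1)` dummies of `h` first,
then original residents, then level-`s` dummies of `h`. -/
noncomputable def hclass {T : ℕ} {qp qm : H → ℕ} (hs : Hos H T qm) : Res R H T qp qm → ℕ
  | Sum.inl _ => 1
  | Sum.inr d =>
      if d.h = hs.1 ∧ 1 ≤ hs.2.val ∧ d.s = hs.2.val - 1 then 0
      else if d.h = hs.1 ∧ d.s = hs.2.val then 2 else 3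

/-- Rank within a preference class. -/
def hinner {T : ℕ} {qp qm : H → ℕ} (rankH : H → R → ℕ) (hs : Hos H T qm) :
    Res R H T qp qm → ℕ
  | Sum.inl r => rankH hs.1 r
  | Sum.inr d => d.i

/-- Preferences of hospital copies over residents of the reduced instance. -/
def prefHos (T : ℕ) (qp qm : H → ℕ) (rankH : H → R → ℕ) (hs : Hos H T qm)
    (x y : Res R H T qp qm) : Prop :=
  hclass hs x < hclass hs y ∨
    (hclass hs x = hclass hs y ∧ hinner rankH hs x < hinner rankH hs y)

variable [Fintype R]

/-- The set of residents matched to the hospital copy `hs`. -/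
noncomputable def mset {T : ℕ} {qp qm : H → ℕ}
    (M : Res R H T qp qm → Option (Hos H T qm)) (hs : Hos H T qm) :
    Finset (Res R H T qp qm) :=
  univ.filter (fun x => M x = some hs)

/-- `M` is a matching of the reduced (HR) instance: it respects acceptability and capacities. -/
def isMatchingRed (T : ℕ) (qp qm : H → ℕ) (E : R → H → Prop)
    (M : Res R H T qp qm → Option (Hos H T qm)) : Prop :=
  (∀ x hs, M x = some hs → edge T qp qm E x hs) ∧
    ∀ hs, (mset M hs).card ≤ cap T qp qm hs

/-- `(x, hs)` is a blocking pair for `M` in the reduced instance. -/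
def blocksRed (T : ℕ) (qp qm : H → ℕ) (E : R → H → Prop) (rankR : R → H → ℕ)
    (rankH : H → R → ℕ) (M : Res R H T qp qm → Option (Hos H T qm))
    (x : Res R H T qp qm) (hs : Hos H T qm) : Prop :=
  edge T qp qm E x hs ∧
    (∀ hs', M x = some hs' → prefRes T qp qm rankR x hs hs') ∧
    ((mset M hs).card < cap T qp qm hs ∨
      ∃ y ∈ mset M hs, prefHos T qp qm rankH hs x y)

/-- Stability in the reduced HR instance. -/
def stableRed (T : ℕ) (qp qm : H → ℕ) (E : R → H → Prop) (rankR : R → H → ℕ)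
    (rankH : H → R → ℕ) (M : Res R H T qp qm → Option (Hos H T qm)) : Prop :=
  isMatchingRed T qp qm E M ∧ ∀ x hs, ¬ blocksRed T qp qm E rankR rankH M x hs

/-- A hospital copy is active if it is matched to at least one non-dummy resident. -/
def active {T : ℕ} {qp qm : H → ℕ}
    (M : Res R H T qp qm → Option (Hos H T qm)) (hs : Hos H T qm) : Prop :=
  ∃ r : R, M (Sum.inl r) = some hs

/-- The matching of the original HRLQ instance obtained from a matching of the reduced
instance: `r` is matched to `h` iff `r` is matched to some level copy of `h`. -/
def mapToG {T : ℕ} {qp qm : H → ℕ}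
    (M : Res R H T qp qm → Option (Hos H T qm)) : R → Option H :=
  fun r => (M (Sum.inl r)).map Prod.fst

/-- Set of residents matched to `h` in a matching of the original instance. -/
noncomputable def msetO (N : R → Option H) (h : H) : Finset R :=
  univ.filter (fun r => N r = some h)

/-- Feasibility in the original HRLQ instance. -/
def feasibleO (E : R → H → Prop) (qp qm : H → ℕ) (N : R → Option H) : Prop :=
  (∀ r h, N r = some h → E r h) ∧
    ∀ h, qm h ≤ (msetO N h).card ∧ (msetO N h).card ≤ qp h

/-- Cardinality of a matching of the original instance. -/
noncomputable def sizeO (N : R → Option H) : ℕ :=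
  (univ.filter (fun r : R => N r ≠ none)).card

/-- `r ∈ R_i`: `r` is matched to a level-`i` hospital copy (unmatched residents are in `R_0`). -/
def inRlev {T : ℕ} {qp qm : H → ℕ}
    (M : Res R H T qp qm → Option (Hos H T qm)) (i : ℕ) (r : R) : Prop :=
  (∃ hs, M (Sum.inl r) = some hs ∧ hs.2.val = i) ∨ (M (Sum.inl r) = none ∧ i = 0)

/-- `h ∈ H_j`: the copy `h^j` is active (with the convention that a hospital matched to no
resident is placed in `H_{T-1}` if it has no lower quota and in `H_{ℓ-1}` otherwise). -/
def inHlev (T : ℕ) (qp qm : H → ℕ)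
    (M : Res R H T qp qm → Option (Hos H T qm)) (j : ℕ) (h : H) : Prop :=
  (∃ s : Fin (ell H T qm), s.val = j ∧ active M (h, s)) ∨
    ((∀ r, mapToG M r ≠ some h) ∧
      ((qm h = 0 ∧ j = T - 1) ∨ (0 < qm h ∧ j = ell H T qm - 1)))

/-- Residents matched to `h` in `Mo` but not in `N`. -/
noncomputable def Aset (Mo N : R → Option H) (h : H) : Finset R :=
  msetO Mo h \ msetO N h

/-- Residents matched to `h` in `N` but not in `Mo`. -/
noncomputable def Bset (Mo N : R → Option H) (h : H) : Finset R :=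
  msetO N h \ msetO Mo h

/-- `σ h` is a correspondence chosen by hospital `h` between `N(h) ∖ Mo(h)` and
`Mo(h) ∖ N(h)`: it is injective, maps into `Mo(h) ∖ N(h)`, and pairs as many residents as
possible (unpaired residents correspond to `⊥`). -/
def validCorr (Mo N : R → Option H) (σ : H → R → Option R) : Prop :=
  ∀ h,
    (∀ r' ∈ Bset Mo N h, ∀ r, σ h r' = some r → r ∈ Aset Mo N h) ∧
    (∀ r₁ ∈ Bset Mo N h, ∀ r₂ ∈ Bset Mo N h, ∀ r,
        σ h r₁ = some r → σ h r₂ = some r → r₁ = r₂) ∧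
    ((∀ r ∈ Aset Mo N h, ∃ r' ∈ Bset Mo N h, σ h r' = some r) ∨
      (∀ r' ∈ Bset Mo N h, σ h r' ≠ none))

/-- The vote of resident `r` comparing partners `x` (in `N`) and `y` (in `Mo`):
`1` if `r` prefers `x`, `-1` if `r` prefers `y`, `0` if they coincide. -/
noncomputable def rvote (rankR : R → H → ℕ) (r : R) (x y : Option H) : ℤ :=
  if x = y then 0
  else
    match x, y with
    | some a, some b => if rankR r a < rankR r b then 1 else -1
    | some _, none => 1
    | none, _ => -1

/-- The net vote of hospital `h` for `N` against `Mo`, given the correspondence `σ h`: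
each resident of `N(h) ∖ Mo(h)` is compared with its corresponding resident of
`Mo(h) ∖ N(h)` (or with `⊥`), and each unpaired resident of `Mo(h) ∖ N(h)` contributes one
vote for `Mo`. -/
noncomputable def hvote (rankH : H → R → ℕ) (Mo N : R → Option H)
    (σ : H → R → Option R) (h : H) : ℤ :=
  (∑ r' ∈ Bset Mo N h,
      (match σ h r' with
        | some r => if rankH h r' < rankH h r then (1 : ℤ) else -1
        | none => 1)) -
    ((Aset Mo N h).filter (fun r => ∀ r' ∈ Bset Mo N h, σ h r' ≠ some r)).card

/-- Total net vote for `N` against `Mo` (given correspondences `σ`). -/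
noncomputable def totalVote (rankR : R → H → ℕ) (rankH : H → R → ℕ)
    (N Mo : R → Option H) (σ : H → R → Option R) : ℤ :=
  (∑ r : R, rvote rankR r (N r) (Mo r)) + ∑ h : H, hvote rankH Mo N σ h

/-- `Mo` is popular among the feasible matchings of the HRLQ instance. -/
def popularAmongFeasible (E : R → H → Prop) (rankR : R → H → ℕ) (rankH : H → R → ℕ)
    (qp qm : H → ℕ) (Mo : R → Option H) : Prop :=
  ∀ N, feasibleO E qp qm N → ∀ σ, validCorr Mo N σ → totalVote rankR rankH N Mo σ ≤ 0

end HRLQ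

open HRLQ Finset

section S4Aux

variable {R H : Type} [Fintype R] [Fintype H]

/-- Non-dummy residents matched to the copy `h^s`. -/
noncomputable def S4Rs (qp qm : H → ℕ) (M : Res R H 2 qp qm → Option (Hos H 2 qm))
    (h : H) (s : Fin (ell H 2 qm)) : Finset R :=
  univ.filter (fun r => M (Sum.inl r) = some (h, s))

/-- Level-`s` dummies of `h` matched to `h^s`. -/
noncomputable def S4Dh (qp qm : H → ℕ) (M : Res R H 2 qp qm → Option (Hos H 2 qm))
    (h : H) (s : Fin (ell H 2 qm)) : Finset (Res R H 2 qp qm) :=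
  (mset M (h, s)).filter (fun x => ∃ d : Dummy H 2 qp qm, x = Sum.inr d ∧ d.s = s.val)

/-- Level-`s-1` dummies of `h` matched to `h^s`. -/
noncomputable def S4Dl (qp qm : H → ℕ) (M : Res R H 2 qp qm → Option (Hos H 2 qm))
    (h : H) (s : Fin (ell H 2 qm)) : Finset (Res R H 2 qp qm) :=
  (mset M (h, s)).filter (fun x => ∃ d : Dummy H 2 qp qm, x = Sum.inr d ∧ d.s + 1 = s.val)

lemma S4mem_mset {qp qm : H → ℕ} (M : Res R H 2 qp qm → Option (Hos H 2 qm))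
    (x : Res R H 2 qp qm) (hs : Hos H 2 qm) : x ∈ mset M hs ↔ M x = some hs := by
  simp [mset]

/-- Two disjoint chunks of the residents matched to a copy. -/
lemma S4split (qp qm : H → ℕ) (M : Res R H 2 qp qm → Option (Hos H 2 qm))
    (h : H) (s : Fin (ell H 2 qm)) (Y : Finset (Res R H 2 qp qm))
    (hY : Y ⊆ mset M (h, s)) (hYd : ∀ x ∈ Y, ∃ d : Dummy H 2 qp qm, x = Sum.inr d) :
    (S4Rs qp qm M h s).card + Y.card ≤ (mset M (h, s)).card := by
  classical
  have himg : (S4Rs qp qm M h s).image Sum.inl ⊆ mset M (h, s) := by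
    intro x hx
    simp only [mem_image, S4Rs, mem_filter, mem_univ, true_and] at hx
    obtain ⟨r, hr, rfl⟩ := hx
    exact (S4mem_mset M _ _).mpr hr
  have hdisj : Disjoint ((S4Rs qp qm M h s).image Sum.inl) Y := by
    refine Finset.disjoint_left.mpr ?_
    rintro x hx hxY
    simp only [mem_image] at hx
    obtain ⟨r, -, rfl⟩ := hx
    obtain ⟨d, hd⟩ := hYd _ hxY
    exact Sum.inl_ne_inr hd
  calc (S4Rs qp qm M h s).card + Y.card
      = ((S4Rs qp qm M h s).image Sum.inl).card + Y.card := by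
        rw [Finset.card_image_of_injective _ Sum.inl_injective]
    _ = (((S4Rs qp qm M h s).image Sum.inl) ∪ Y).card :=
        (Finset.card_union_of_disjoint hdisj).symm
    _ ≤ (mset M (h, s)).card := Finset.card_le_card (Finset.union_subset himg hY)

/-- If a copy `h^t`, `t = s+1`, has a matched non-dummy resident, then every level-`s`
dummy of `h` acceptable to `h^t` is matched, necessarily to `h^s` or `h^t`. -/
lemma S4key (E : R → H → Prop) (rankR : R → H → ℕ) (rankH : H → R → ℕ)
    (qp qm : H → ℕ) (M : Res R H 2 qp qm → Option (Hos H 2 qm))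
    (hedge : ∀ x hs, M x = some hs → edge 2 qp qm E x hs)
    (hstab : ∀ x hs, ¬ blocksRed 2 qp qm E rankR rankH M x hs)
    (h : H) (s t : Fin (ell H 2 qm)) (hts : t.val = s.val + 1)
    (r : R) (hrM : M (Sum.inl r) = some (h, t))
    (o A : ℕ) (hoA : o + A ≤ qp h)
    (hcon : ∀ j, j < A → (2 ≤ s.val → o + j < qm h) ∧ (s.val = 1 → qp h - qm h ≤ o + j)) :
    A ≤ (S4Dh qp qm M h s).card + (S4Dl qp qm M h t).card := by
  classical
  have hsle : s.val ≤ ell H 2 qm - 2 := by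
    have h1 := t.isLt
    have h2 : (2:ℕ) ≤ ell H 2 qm := Nat.le_add_right 2 _
    omega
  -- the acceptable dummies in question
  set d : Fin A → Dummy H 2 qp qm := fun j =>
    ⟨⟨h, (⟨s.val, s.isLt⟩, ⟨o + j.val, by have := j.isLt; omega⟩)⟩,
      ⟨hsle, fun h2 => (hcon j.val j.isLt).1 h2⟩⟩ with hd
  have hds : ∀ j : Fin A, Dummy.s (d j) = s.val := fun j => rfl
  have hdh : ∀ j : Fin A, Dummy.h (d j) = h := fun j => rfl
  have hdi : ∀ j : Fin A, Dummy.i (d j) = o + j.val := fun j => rfl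
  have h1t : 1 ≤ t.val := by omega
  have hgmem : ∀ j : Fin A,
      Sum.inr (d j) ∈ S4Dh qp qm M h s ∨ Sum.inr (d j) ∈ S4Dl qp qm M h t := by
    intro j
    have hmatch : M (Sum.inr (d j)) ≠ none := by
      intro hnone
      apply hstab (Sum.inr (d j)) (h, t)
      refine ⟨⟨hdh j, Or.inr ⟨by rw [hds j]; exact hts, ?_⟩⟩, ?_,
        Or.inr ⟨Sum.inl r, (S4mem_mset M _ _).mpr hrM, Or.inl ?_⟩⟩
      · rintro ⟨hc1, hc2⟩
        rw [hds j] at hc1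
        have hc2' : o + j.val < qp h - qm h := hc2
        have := (hcon j.val j.isLt).2 (by omega)
        omega
      · intro hs' hMs'
        rw [hnone] at hMs'
        cases hMs'
      · -- hclass (h,t) (inr (d j)) = 0 < 1 = hclass (h,t) (inl r)
        have hc0 : hclass (qp := qp) (qm := qm) ((h, t) : Hos H 2 qm)
            (Sum.inr (d j) : Res R H 2 qp qm) = 0 := by
          simp only [hclass]
          rw [if_pos ⟨hdh j, h1t, by rw [hds j]; omega⟩]
        have hc1 : hclass (qp := qp) (qm := qm) ((h, t) : Hos H 2 qm)
            (Sum.inl r : Res R H 2 qp qm) = 1 := rfl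
        rw [hc0, hc1]
        omega
    obtain ⟨hs', hMs'⟩ := Option.ne_none_iff_exists'.mp hmatch
    obtain ⟨hh1, hor⟩ := hedge _ _ hMs'
    have hh1' : hs'.1 = h := by rw [← hh1]; exact (hdh j).symm ▸ rfl
    rcases hor with hc | ⟨hc, -⟩
    · -- matched to h^s
      have hhs' : hs' = ((h, s) : Hos H 2 qm) := by
        have h2 : hs'.2 = s := Fin.ext (by rw [hc, hds j])
        exact Prod.ext hh1' h2
      rw [hhs'] at hMs'
      refine Or.inl ?_
      rw [S4Dh]
      exact Finset.mem_filter.mpr ⟨(S4mem_mset M _ _).mpr hMs', ⟨d j, rfl, hds j⟩⟩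
    · -- matched to h^t
      have hhs' : hs' = ((h, t) : Hos H 2 qm) := by
        have h2 : hs'.2 = t := Fin.ext (by rw [hc, hds j]; omega)
        exact Prod.ext hh1' h2
      rw [hhs'] at hMs'
      refine Or.inr ?_
      rw [S4Dl]
      exact Finset.mem_filter.mpr ⟨(S4mem_mset M _ _).mpr hMs', ⟨d j, rfl, by rw [hds j]; omega⟩⟩
  have hinj : ∀ a b : Fin A, (Sum.inr (d a) : Res R H 2 qp qm) = Sum.inr (d b) → a = b := by
    intro a b hab
    have h1 : Dummy.i (d a) = Dummy.i (d b) := by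
      rw [Sum.inr.injEq] at hab
      rw [hab]
    rw [hdi a, hdi b] at h1
    exact Fin.ext (by omega)
  set P : Finset (Fin A) := univ.filter
    (fun j => Sum.inr (d j) ∈ S4Dh qp qm M h s) with hP
  have hc1 : P.card ≤ (S4Dh qp qm M h s).card := by
    apply Finset.card_le_card_of_injOn
      (fun j : Fin A => (Sum.inr (d j) : Res R H 2 qp qm))
    · intro j hj
      exact (Finset.mem_filter.mp hj).2
    · intro a _ b _ hab
      exact hinj a b hab
  have hc2 : ((univ : Finset (Fin A)) \ P).card ≤ (S4Dl qp qm M h t).card := by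
    apply Finset.card_le_card_of_injOn
      (fun j : Fin A => (Sum.inr (d j) : Res R H 2 qp qm))
    · intro j hj
      have hj' : Sum.inr (d j) ∉ S4Dh qp qm M h s := by
        intro hmem
        exact (Finset.mem_sdiff.mp hj).2
          (Finset.mem_filter.mpr ⟨Finset.mem_univ _, hmem⟩)
      rcases hgmem j with hx | hx
      · exact absurd hx hj'
      · exact hx
    · intro a _ b _ hab
      exact hinj a b hab
  have hc3 : ((univ : Finset (Fin A)) \ P).card = (univ : Finset (Fin A)).card - P.card :=
    by rw [Finset.card_sdiff, Finset.inter_univ]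
  have hc4 : P.card ≤ (univ : Finset (Fin A)).card := Finset.card_le_card (Finset.subset_univ P)
  have hc5 : (univ : Finset (Fin A)).card = A := by simp
  omega

/-- If a non-dummy resident is matched to `h^{s0}`, no level-`t` dummy can be matched to
`h^t` for `t > s0`. -/
lemma S4dh_empty (E : R → H → Prop) (rankR : R → H → ℕ) (rankH : H → R → ℕ)
    (qp qm : H → ℕ) (M : Res R H 2 qp qm → Option (Hos H 2 qm))
    (hedge : ∀ x hs, M x = some hs → edge 2 qp qm E x hs)
    (hstab : ∀ x hs, ¬ blocksRed 2 qp qm E rankR rankH M x hs)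
    (h : H) (s0 t : Fin (ell H 2 qm)) (hlt : s0.val < t.val)
    (r0 : R) (hr0 : M (Sum.inl r0) = some (h, s0)) :
    S4Dh qp qm M h t = ∅ := by
  classical
  rw [Finset.eq_empty_iff_forall_notMem]
  intro x hx
  rw [S4Dh, Finset.mem_filter] at hx
  obtain ⟨hxm, dd, rfl, hds⟩ := hx
  have hMd : M (Sum.inr dd) = some (h, t) := (S4mem_mset M _ _).mp hxm
  have hddh : Dummy.h dd = h := by
    have := (hedge _ _ hMd).1
    exact this
  apply hstab (Sum.inl r0) (h, t)
  refine ⟨?_, ?_, Or.inr ⟨Sum.inr dd, (S4mem_mset M _ _).mpr hMd, Or.inl ?_⟩⟩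
  · have h1 : edge 2 qp qm E (Sum.inl r0) (h, s0) := hedge _ _ hr0
    exact h1
  · intro hs' hMs'
    rw [hr0] at hMs'
    obtain rfl : ((h, s0) : Hos H 2 qm) = hs' := Option.some.inj hMs'
    exact Or.inl hlt
  · -- hclass (h,t) (inl r0) = 1 < 2 = hclass (h,t) (inr dd)
    have hc2 : hclass (qp := qp) (qm := qm) ((h, t) : Hos H 2 qm)
        (Sum.inr dd : Res R H 2 qp qm) = 2 := by
      simp only [hclass]
      rw [if_neg, if_pos ⟨hddh, hds⟩]
      rintro ⟨-, -, hbad⟩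
      omega
    have hc1 : hclass (qp := qp) (qm := qm) ((h, t) : Hos H 2 qm)
        (Sum.inl r0 : Res R H 2 qp qm) = 1 := rfl
    rw [hc1, hc2]
    omega

end S4Aux

/-- In any stable matching `M` of the reduced HR instance `G'`, every hospital `h` of the
original HRLQ instance has at most `q⁺(h)` non-dummy residents matched across all of its
level copies. -/
theorem statement4 {R H : Type} [Fintype R] [Fintype H]
    (E : R → H → Prop) (rankR : R → H → ℕ) (rankH : H → R → ℕ) (qp qm : H → ℕ)
    (hq : ∀ h, qm h ≤ qp h)
    (M : Res R H 2 qp qm → Option (Hos H 2 qm))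
    (hst : stableRed 2 qp qm E rankR rankH M) (h : H) :
    (univ.filter (fun r : R => ∃ s, M (Sum.inl r) = some (h, s))).card ≤ qp h := by
  classical
  obtain ⟨⟨hedge, hcap⟩, hstab⟩ := hst
  -- capacity bounds for the copies of h
  have hcap_lt : ∀ s : Fin (ell H 2 qm), s.val < 2 → (mset M (h, s)).card ≤ qp h := by
    intro s hs2
    have h1 := hcap (h, s)
    unfold cap at h1
    simpa [hs2] using h1
  have hcap_ge : ∀ s : Fin (ell H 2 qm), 2 ≤ s.val → (mset M (h, s)).card ≤ qm h := by
    intro s hs2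
    have h1 := hcap (h, s)
    unfold cap at h1
    simpa [Nat.not_lt.mpr hs2] using h1
  have hcap_qp : ∀ s : Fin (ell H 2 qm), (mset M (h, s)).card ≤ qp h := by
    intro s
    by_cases hs2 : s.val < 2
    · exact hcap_lt s hs2
    · exact le_trans (hcap_ge s (Nat.not_lt.mp hs2)) (hq h)
  -- facts about S4Dh and S4Dl
  have hDh_sub : ∀ s : Fin (ell H 2 qm), S4Dh qp qm M h s ⊆ mset M (h, s) :=
    fun s => Finset.filter_subset _ _
  have hDl_sub : ∀ s : Fin (ell H 2 qm), S4Dl qp qm M h s ⊆ mset M (h, s) :=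
    fun s => Finset.filter_subset _ _
  have hDh_inr : ∀ s : Fin (ell H 2 qm), ∀ x ∈ S4Dh qp qm M h s,
      ∃ d : Dummy H 2 qp qm, x = Sum.inr d := by
    intro s x hx
    obtain ⟨-, d, rfl, -⟩ := Finset.mem_filter.mp hx
    exact ⟨d, rfl⟩
  have hDl_inr : ∀ s : Fin (ell H 2 qm), ∀ x ∈ S4Dl qp qm M h s,
      ∃ d : Dummy H 2 qp qm, x = Sum.inr d := by
    intro s x hx
    obtain ⟨-, d, rfl, -⟩ := Finset.mem_filter.mp hx
    exact ⟨d, rfl⟩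
  -- decompose the target set by levels
  have hdecomp : (univ.filter (fun r : R => ∃ s, M (Sum.inl r) = some (h, s)))
      = univ.biUnion (fun s : Fin (ell H 2 qm) => S4Rs qp qm M h s) := by
    ext r
    simp [S4Rs]
  have hdisj : ∀ a ∈ (univ : Finset (Fin (ell H 2 qm))),
      ∀ b ∈ (univ : Finset (Fin (ell H 2 qm))), a ≠ b →
      Disjoint (S4Rs qp qm M h a) (S4Rs qp qm M h b) := by
    intro a _ b _ hab
    rw [Finset.disjoint_left]
    intro r hra hrb
    simp only [S4Rs, Finset.mem_filter, Finset.mem_univ, true_and] at hra hrb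
    apply hab
    have h1 : some ((h, a) : Hos H 2 qm) = some ((h, b) : Hos H 2 qm) :=
      hra.symm.trans hrb
    have h2 : ((h, a) : Hos H 2 qm) = (h, b) := Option.some.inj h1
    exact congrArg Prod.snd h2
  rw [hdecomp, Finset.card_biUnion hdisj]
  -- main case distinction
  by_cases hex : ∃ s : Fin (ell H 2 qm), (S4Rs qp qm M h s).Nonempty
  swap
  · push_neg at hex
    have : ∀ s : Fin (ell H 2 qm), (S4Rs qp qm M h s).card = 0 := by
      intro s
      rw [Finset.card_eq_zero, ← Finset.not_nonempty_iff_eq_empty]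
      exact Finset.not_nonempty_iff_eq_empty.mpr (hex s)
    rw [Finset.sum_congr rfl (fun s _ => this s), Finset.sum_const_zero]
    exact Nat.zero_le _
  · -- minimal active level s0
    set S := univ.filter (fun s : Fin (ell H 2 qm) => (S4Rs qp qm M h s).Nonempty) with hS
    have hSne : S.Nonempty := by
      obtain ⟨s, hs⟩ := hex
      exact ⟨s, Finset.mem_filter.mpr ⟨Finset.mem_univ _, hs⟩⟩
    set s0 := S.min' hSne with hs0def
    have hs0ne : (S4Rs qp qm M h s0).Nonempty := (Finset.mem_filter.mp (S.min'_mem hSne)).2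
    obtain ⟨r0, hr0mem⟩ := hs0ne
    have hr0 : M (Sum.inl r0) = some (h, s0) := by
      simpa [S4Rs] using hr0mem
    have hmin : ∀ u : Fin (ell H 2 qm), (S4Rs qp qm M h u).Nonempty → s0 ≤ u :=
      fun u hu => Finset.min'_le S u (Finset.mem_filter.mpr ⟨Finset.mem_univ _, hu⟩)
    -- the nonzero levels are s0 and s0 + 1 only
    have hsupp : ∀ u : Fin (ell H 2 qm), (S4Rs qp qm M h u).Nonempty →
        u.val ≤ s0.val + 1 := by
      intro u hu
      by_contra hgt
      push_neg at hgt
      have hu2 : 2 ≤ u.val := by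
        have := hmin u hu
        omega
      set sp : Fin (ell H 2 qm) := ⟨u.val - 1, by have := u.isLt; omega⟩ with hsp
      have hspv : sp.val = u.val - 1 := rfl
      have hts : u.val = sp.val + 1 := by omega
      obtain ⟨ru, hrumem⟩ := hu
      have hru : M (Sum.inl ru) = some (h, u) := by
        simpa [S4Rs] using hrumem
      have hkeyu : qm h ≤ (S4Dh qp qm M h sp).card + (S4Dl qp qm M h u).card := by
        apply S4key E rankR rankH qp qm M hedge hstab h sp u hts ru hru
          (if sp.val = 1 then qp h - qm h else 0) (qm h)
        · by_cases hsp1 : sp.val = 1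
          · rw [if_pos hsp1]
            have := hq h
            omega
          · rw [if_neg hsp1]
            have := hq h
            omega
        · intro j hj
          constructor
          · intro h2
            rw [if_neg (by omega)]
            omega
          · intro h1
            rw [if_pos h1]
            omega
      have hempty : S4Dh qp qm M h sp = ∅ := by
        apply S4dh_empty E rankR rankH qp qm M hedge hstab h s0 sp ?_ r0 hr0
        have h1 := hmin u (⟨ru, hrumem⟩ : (S4Rs qp qm M h u).Nonempty)
        have h2 := Fin.le_iff_val_le_val.mp h1
        omega
      have hsplitu : (S4Rs qp qm M h u).card + (S4Dl qp qm M h u).card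
          ≤ (mset M (h, u)).card :=
        S4split qp qm M h u _ (hDl_sub u) (hDl_inr u)
      have hcardu : 1 ≤ (S4Rs qp qm M h u).card := Finset.card_pos.mpr ⟨ru, hrumem⟩
      have hmsetu := hcap_ge u hu2
      rw [hempty] at hkeyu
      simp only [Finset.card_empty] at hkeyu
      omega
    -- sum over the support
    have hzero : ∀ u ∈ (univ : Finset (Fin (ell H 2 qm))),
        u ∉ univ.filter (fun u : Fin (ell H 2 qm) => u = s0 ∨ u.val = s0.val + 1) →
        (S4Rs qp qm M h u).card = 0 := by
      intro u _ hu
      simp only [Finset.mem_filter, Finset.mem_univ, true_and, not_or] at hu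
      rw [Finset.card_eq_zero, ← Finset.not_nonempty_iff_eq_empty]
      intro hne
      have h1 := hmin u hne
      have h2 := hsupp u hne
      rcases Nat.lt_or_ge u.val (s0.val + 1) with h3 | h3
      · exact hu.1 (Fin.ext (by have := Fin.le_iff_val_le_val.mp h1; omega))
      · exact hu.2 (by omega)
    have hsum : ∑ u : Fin (ell H 2 qm), (S4Rs qp qm M h u).card
        = ∑ u ∈ univ.filter (fun u : Fin (ell H 2 qm) => u = s0 ∨ u.val = s0.val + 1),
            (S4Rs qp qm M h u).card :=
      (Finset.sum_subset (Finset.filter_subset _ _) hzero).symm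
    rw [hsum]
    by_cases hlast : s0.val + 1 < ell H 2 qm
    · -- the level s0 + 1 exists
      set t0 : Fin (ell H 2 qm) := ⟨s0.val + 1, hlast⟩ with ht0
      have ht0v : t0.val = s0.val + 1 := rfl
      have hQsub : univ.filter (fun u : Fin (ell H 2 qm) => u = s0 ∨ u.val = s0.val + 1)
          ⊆ {s0, t0} := by
        intro u hu
        simp only [Finset.mem_filter, Finset.mem_univ, true_and] at hu
        simp only [Finset.mem_insert, Finset.mem_singleton]
        rcases hu with h1 | h1
        · exact Or.inl h1
        · exact Or.inr (Fin.ext h1)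
      have hstep : ∑ u ∈ univ.filter
            (fun u : Fin (ell H 2 qm) => u = s0 ∨ u.val = s0.val + 1),
            (S4Rs qp qm M h u).card
          ≤ (S4Rs qp qm M h s0).card + (S4Rs qp qm M h t0).card := by
        have hne : s0 ≠ t0 := by
          intro hcon
          have h1 : s0.val = t0.val := congrArg Fin.val hcon
          omega
        calc ∑ u ∈ univ.filter
              (fun u : Fin (ell H 2 qm) => u = s0 ∨ u.val = s0.val + 1),
              (S4Rs qp qm M h u).card
            ≤ ∑ u ∈ ({s0, t0} : Finset (Fin (ell H 2 qm))), (S4Rs qp qm M h u).card :=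
              Finset.sum_le_sum_of_subset hQsub
          _ = (S4Rs qp qm M h s0).card + (S4Rs qp qm M h t0).card :=
              Finset.sum_pair hne
      refine le_trans hstep ?_
      by_cases hne2 : (S4Rs qp qm M h t0).Nonempty
      · -- both levels active: use the key counting lemma
        obtain ⟨rt, hrtmem⟩ := hne2
        have hrt : M (Sum.inl rt) = some (h, t0) := by
          simpa [S4Rs] using hrtmem
        have hts : t0.val = s0.val + 1 := ht0v
        have h1 : (S4Rs qp qm M h s0).card + (S4Dh qp qm M h s0).card
            ≤ (mset M (h, s0)).card :=
          S4split qp qm M h s0 _ (hDh_sub s0) (hDh_inr s0)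
        have h2 : (S4Rs qp qm M h t0).card + (S4Dl qp qm M h t0).card
            ≤ (mset M (h, t0)).card :=
          S4split qp qm M h t0 _ (hDl_sub t0) (hDl_inr t0)
        rcases Nat.lt_or_ge s0.val 1 with hs00 | hs01
        · -- s0 = 0
          have hs00' : s0.val = 0 := by omega
          have hA : qp h ≤ (S4Dh qp qm M h s0).card + (S4Dl qp qm M h t0).card := by
            apply S4key E rankR rankH qp qm M hedge hstab h s0 t0 hts rt hrt 0 (qp h)
              (by omega)
            intro j hj
            omega
          have hc1 := hcap_lt s0 (by omega)
          have hc2 := hcap_lt t0 (by omega)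
          omega
        rcases Nat.lt_or_ge s0.val 2 with hs0c | hs0c
        · -- s0 = 1
          have hs01' : s0.val = 1 := by omega
          have hA : qm h ≤ (S4Dh qp qm M h s0).card + (S4Dl qp qm M h t0).card := by
            apply S4key E rankR rankH qp qm M hedge hstab h s0 t0 hts rt hrt
              (qp h - qm h) (qm h) (by have := hq h; omega)
            intro j hj
            omega
          have hc1 := hcap_lt s0 (by omega)
          have hc2 := hcap_ge t0 (by omega)
          omega
        · -- s0 ≥ 2
          have hA : qm h ≤ (S4Dh qp qm M h s0).card + (S4Dl qp qm M h t0).card := by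
            apply S4key E rankR rankH qp qm M hedge hstab h s0 t0 hts rt hrt 0 (qm h)
              (by have := hq h; omega)
            intro j hj
            omega
          have hc1 := hcap_ge s0 hs0c
          have hc2 := hcap_ge t0 (by omega)
          have := hq h
          omega
      · -- only level s0 active
        have h0 : (S4Rs qp qm M h t0).card = 0 := by
          rw [Finset.card_eq_zero, ← Finset.not_nonempty_iff_eq_empty]
          exact hne2
        have h1 : (S4Rs qp qm M h s0).card + (0 : ℕ) ≤ (mset M (h, s0)).card :=
          S4split qp qm M h s0 ∅ (by simp) (by simp)
        have h2 := hcap_qp s0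
        omega
    · -- s0 is the top level
      have hQsub : univ.filter (fun u : Fin (ell H 2 qm) => u = s0 ∨ u.val = s0.val + 1)
          ⊆ {s0} := by
        intro u hu
        simp only [Finset.mem_filter, Finset.mem_univ, true_and] at hu
        simp only [Finset.mem_singleton]
        rcases hu with h1 | h1
        · exact h1
        · exact absurd (h1 ▸ u.isLt) (by omega)
      have hstep : ∑ u ∈ univ.filter
            (fun u : Fin (ell H 2 qm) => u = s0 ∨ u.val = s0.val + 1),
            (S4Rs qp qm M h u).card
          ≤ (S4Rs qp qm M h s0).card := by
        calc ∑ u ∈ univ.filter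
              (fun u : Fin (ell H 2 qm) => u = s0 ∨ u.val = s0.val + 1),
              (S4Rs qp qm M h u).card
            ≤ ∑ u ∈ ({s0} : Finset (Fin (ell H 2 qm))), (S4Rs qp qm M h u).card :=
              Finset.sum_le_sum_of_subset hQsub
          _ = (S4Rs qp qm M h s0).card := Finset.sum_singleton _ _
      refine le_trans hstep ?_
      have h1 : (S4Rs qp qm M h s0).card + (0 : ℕ) ≤ (mset M (h, s0)).card :=
        S4split qp qm M h s0 ∅ (by simp) (by simp)
      have h2 := hcap_qp s0
      omega
end

section
/- In any stable matching M' of the reduced HR instance G', every level copy h^s with s < ℓ−1 of every hospital h is fully subscribed; only the level-(ℓ−1) copy can be under-subscribed. -/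
open Finset

attribute [local instance] Classical.propDecidable

open HRLQ Finset

/-- In any stable matching `M` of the reduced HR instance `G'`, every level copy `h^s` with
`s < ℓ - 1` is fully subscribed; only the level-`(ℓ-1)` copy can be under-subscribed. -/
theorem statement5 {R H : Type} [Fintype R] [Fintype H]
    (E : R → H → Prop) (rankR : R → H → ℕ) (rankH : H → R → ℕ) (qp qm : H → ℕ)
    (hq : ∀ h, qm h ≤ qp h)
    (M : Res R H 2 qp qm → Option (Hos H 2 qm))
    (hst : stableRed 2 qp qm E rankR rankH M)
    (h : H) (s : Fin (ell H 2 qm)) (hs : s.val < ell H 2 qm - 1) :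
    (mset M (h, s)).card = cap 2 qp qm (h, s) := by
  obtain ⟨hmatch, hstab⟩ := hst
  by_contra hne
  have hlt : (mset M (h, s)).card < cap 2 qp qm (h, s) :=
    lt_of_le_of_ne (hmatch.2 (h, s)) hne
  set c := cap 2 qp qm (h, s) with hc
  have hell : 2 ≤ ell H 2 qm := Nat.le_add_right 2 _
  have hsle : s.val ≤ ell H 2 qm - 2 := by omega
  have hcval : c = if s.val < 2 then qp h else qm h := rfl
  have hjp : ∀ j : Fin c, j.val < qp h := by
    intro j
    by_cases h2 : s.val < 2
    · have : c = qp h := by rw [hcval, if_pos h2]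
      omega
    · have : c = qm h := by rw [hcval, if_neg h2]
      have := hq h; omega
  have hjm : ∀ j : Fin c, 2 ≤ s.val → j.val < qm h := by
    intro j h2
    have : c = qm h := by rw [hcval, if_neg (by omega)]
    omega
  set d : Fin c → Dummy H 2 qp qm := fun j =>
    ⟨⟨h, (s, ⟨j.val, hjp j⟩)⟩, ⟨hsle, hjm j⟩⟩ with hd
  have hdinj : Function.Injective d := by
    intro a b hab
    have : (d a).1.2.2.val = (d b).1.2.2.val := by rw [hab]
    simpa [hd, Fin.ext_iff] using this
  -- not all dummies d j can be matched to (h, s)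
  have hex : ∃ j : Fin c, M (Sum.inr (d j)) ≠ some (h, s) := by
    by_contra hall
    push_neg at hall
    have hle : c ≤ (mset M (h, s)).card := by
      have h1 : ∀ j ∈ (univ : Finset (Fin c)),
          (Sum.inr (d j) : Res R H 2 qp qm) ∈ mset M (h, s) := fun j _ => by
        unfold mset
        exact (@Finset.mem_filter _ (fun x : Res R H 2 qp qm => M x = some (h, s))
          (fun a => (M a).instDecidableEq (some (h, s))) univ _).mpr ⟨Finset.mem_univ _, hall j⟩
      have := Finset.card_le_card_of_injOn _ h1
        (fun a _ b _ hab => hdinj (Sum.inr.inj hab))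
      simpa using this
    omega
  obtain ⟨j, hj⟩ := hex
  apply hstab (Sum.inr (d j)) (h, s)
  have hdh : (d j).h = h := rfl
  have hds : (d j).s = s.val := rfl
  refine ⟨⟨hdh, Or.inl hds.symm⟩, ?_, Or.inl hlt⟩
  intro hs' hM
  have hne' : hs' ≠ (h, s) := by
    intro h'; exact hj (h' ▸ hM)
  show dkey (d j) (h, s) < dkey (d j) hs'
  have h0 : dkey (d j) (h, s) = 0 := by
    simp [dkey, hdh, hds]
  rw [h0]
  have : ¬(hs'.1 = (d j).h ∧ hs'.2.val = (d j).s) := by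
    rintro ⟨h1, h2⟩
    apply hne'
    have : hs'.2 = s := Fin.ext (by simpa [hds] using h2)
    exact Prod.ext (by simpa [hdh] using h1) this
  unfold dkey
  rw [if_neg this]
  split <;> omega
end

section
/- Let M' be a stable matching in the reduced HR instance G' and suppose the level-s copy h^s of hospital h is active (matched to at least one non-dummy resident). Then: (a) at least one position of h^{s−1} is matched to a level-(s−1) dummy resident; (b) for every j ≤ s−2, h^j is inactive and all its positions are matched to level-j dummy residents; (c) for every j ≥ s+2, h^j is inactive and all its positions are matched to level-(j−1) dummy residents. -/
open Finset

attribute [local instance] Classical.propDecidable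

open HRLQ Finset

section Aux

variable {R H : Type} [Fintype R] [Fintype H]
variable {E : R → H → Prop} {rankR : R → H → ℕ} {rankH : H → R → ℕ} {qp qm : H → ℕ}
variable {M : Res R H 2 qp qm → Option (Hos H 2 qm)}

set_option linter.unusedSectionVars false


lemma two_le_ell : 2 ≤ ell H 2 qm := Nat.le_add_right 2 _

lemma dummy_i_lt (d : Dummy H 2 qp qm) : d.i < qp d.h := d.1.2.2.isLt

lemma dummy_i_lt_qm (d : Dummy H 2 qp qm) (h2 : 2 ≤ d.s) : d.i < qm d.h := d.2.2 h2

lemma dummy_s_le (d : Dummy H 2 qp qm) : d.s ≤ ell H 2 qm - 2 := d.2.1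

lemma dummy_ext {d₁ d₂ : Dummy H 2 qp qm} (h1 : d₁.h = d₂.h) (h2 : d₁.s = d₂.s)
    (h3 : d₁.i = d₂.i) : d₁ = d₂ := by
  obtain ⟨⟨a, b, c⟩, hd⟩ := d₁
  obtain ⟨⟨a', b', c'⟩, hd'⟩ := d₂
  simp only [Dummy.h] at h1
  subst h1
  simp only [Dummy.s, Dummy.i] at h2 h3
  have hb : b = b' := Fin.ext h2
  have hc : c = c' := Fin.ext h3
  subst hb; subst hc
  rfl

lemma hos_ext {hs : Hos H 2 qm} {h : H} {t : ℕ} (h1 : hs.1 = h) (h2 : hs.2.val = t)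
    (ht : t < ell H 2 qm) : hs = (h, ⟨t, ht⟩) := by
  have h2' : hs.2 = ⟨t, ht⟩ := Fin.ext h2
  rw [← h1, ← h2']
  rfl

lemma hclass_inl (hs : Hos H 2 qm) (r : R) :
    hclass (qp := qp) (qm := qm) hs (Sum.inl r) = 1 := rfl

lemma hclass_inr_zero {hs : Hos H 2 qm} {d : Dummy H 2 qp qm}
    (h1 : d.h = hs.1) (h2 : 1 ≤ hs.2.val) (h3 : d.s = hs.2.val - 1) :
    hclass (R := R) hs (Sum.inr d) = 0 := by
  simp only [hclass]
  rw [if_pos ⟨h1, h2, h3⟩]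

lemma hclass_inr_two {hs : Hos H 2 qm} {d : Dummy H 2 qp qm}
    (h1 : d.h = hs.1) (h3 : d.s = hs.2.val) :
    hclass (R := R) hs (Sum.inr d) = 2 := by
  simp only [hclass]
  rw [if_neg, if_pos ⟨h1, h3⟩]
  rintro ⟨-, hy, hz⟩
  omega

lemma mem_mset {x : Res R H 2 qp qm} {hs : Hos H 2 qm} :
    x ∈ mset M hs ↔ M x = some hs := by simp [mset]

lemma nb (hst : stableRed 2 qp qm E rankR rankH M) {x : Res R H 2 qp qm} {hs : Hos H 2 qm}
    (he : edge 2 qp qm E x hs)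
    (hp : ∀ hs', M x = some hs' → prefRes 2 qp qm rankR x hs hs') :
    cap 2 qp qm hs ≤ (mset M hs).card ∧
      ∀ y ∈ mset M hs, ¬ prefHos 2 qp qm rankH hs x y := by
  have hb := hst.2 x hs
  unfold blocksRed at hb
  push_neg at hb
  exact hb he hp

lemma dummy_opts (hst : stableRed 2 qp qm E rankR rankH M) {d : Dummy H 2 qp qm}
    {hs : Hos H 2 qm} (hM : M (Sum.inr d) = some hs) :
    d.h = hs.1 ∧ (hs.2.val = d.s ∨ hs.2.val = d.s + 1) := by
  have he := hst.1.1 _ _ hM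
  simp only [edge] at he
  exact ⟨he.1, he.2.elim Or.inl fun h' => Or.inr h'.1⟩

/-- Non-exception dummies of `h` at level `t`. -/
noncomputable def Dset (qp qm : H → ℕ) (h : H) (t : ℕ) : Finset (Dummy H 2 qp qm) :=
  univ.filter (fun d => d.h = h ∧ d.s = t ∧ (t = 1 → qp h - qm h ≤ d.i))

/-- All dummies of `h` at level `t`. -/
noncomputable def Fset (qp qm : H → ℕ) (h : H) (t : ℕ) : Finset (Dummy H 2 qp qm) :=
  univ.filter (fun d => d.h = h ∧ d.s = t)

lemma mem_Dset {d : Dummy H 2 qp qm} {h : H} {t : ℕ} :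
    d ∈ Dset qp qm h t ↔ d.h = h ∧ d.s = t ∧ (t = 1 → qp h - qm h ≤ d.i) := by
  simp [Dset]

lemma mem_Fset {d : Dummy H 2 qp qm} {h : H} {t : ℕ} :
    d ∈ Fset qp qm h t ↔ d.h = h ∧ d.s = t := by
  simp [Fset]

/-- Explicit dummy constructor. -/
def mkD (qp qm : H → ℕ) (h : H) (t i : ℕ) (ht : t ≤ ell H 2 qm - 2) (hi : i < qp h)
    (h2 : 2 ≤ t → i < qm h) : Dummy H 2 qp qm :=
  ⟨⟨h, (⟨t, by have := two_le_ell (H := H) (qm := qm); omega⟩, ⟨i, hi⟩)⟩, ht, h2⟩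

lemma mkD_h (qp qm : H → ℕ) (h : H) (t i : ℕ) (ht) (hi) (h2) :
    (mkD qp qm h t i ht hi h2).h = h := rfl

lemma mkD_s (qp qm : H → ℕ) (h : H) (t i : ℕ) (ht) (hi) (h2) :
    (mkD qp qm h t i ht hi h2).s = t := rfl

lemma mkD_i (qp qm : H → ℕ) (h : H) (t i : ℕ) (ht) (hi) (h2) :
    (mkD qp qm h t i ht hi h2).i = i := rfl

lemma card_Dset {h : H} {t : ℕ} (hq : qm h ≤ qp h) (ht : t ≤ ell H 2 qm - 2) :
    (Dset qp qm h t).card = if t = 0 then qp h else qm h := by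
  have hcard : (Dset qp qm h t).card =
      (if t = 0 then Finset.range (qp h)
        else if t = 1 then Finset.Ico (qp h - qm h) (qp h) else Finset.range (qm h)).card := by
    apply Finset.card_bij (fun d _ => d.i)
    · intro d hd
      rw [mem_Dset] at hd
      obtain ⟨hdh, hds, hdi⟩ := hd
      have hiq : d.i < qp h := hdh ▸ dummy_i_lt d
      split_ifs with h0 h1
      · simpa using hiq
      · simp only [Finset.mem_Ico]
        exact ⟨hdi h1, hiq⟩
      · have h2 : 2 ≤ t := by omega
        have := dummy_i_lt_qm d (by omega)
        rw [hdh] at this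
        simpa using this
    · intro d₁ h₁ d₂ h₂ hf
      rw [mem_Dset] at h₁ h₂
      exact dummy_ext (h₁.1.trans h₂.1.symm) (h₁.2.1.trans h₂.2.1.symm) hf
    · intro b hb
      split_ifs at hb with h0 h1
      · rw [Finset.mem_range] at hb
        exact ⟨mkD qp qm h t b ht hb (by omega), by rw [mem_Dset]; exact ⟨rfl, rfl, by omega⟩, rfl⟩
      · rw [Finset.mem_Ico] at hb
        exact ⟨mkD qp qm h t b ht hb.2 (by omega),
          by rw [mem_Dset]; exact ⟨rfl, rfl, fun _ => hb.1⟩, rfl⟩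
      · rw [Finset.mem_range] at hb
        exact ⟨mkD qp qm h t b ht (lt_of_lt_of_le hb hq) (fun _ => hb),
          by rw [mem_Dset]; exact ⟨rfl, rfl, by omega⟩, rfl⟩
  rw [hcard]
  split_ifs with h0 h1 <;> simp [Nat.card_Ico] <;> omega

lemma card_Fset {h : H} {t : ℕ} (hq : qm h ≤ qp h) (ht : t ≤ ell H 2 qm - 2) :
    (Fset qp qm h t).card = if t < 2 then qp h else qm h := by
  have hcard : (Fset qp qm h t).card =
      (if t < 2 then Finset.range (qp h) else Finset.range (qm h)).card := by
    apply Finset.card_bij (fun d _ => d.i)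
    · intro d hd
      rw [mem_Fset] at hd
      obtain ⟨hdh, hds⟩ := hd
      have hiq : d.i < qp h := hdh ▸ dummy_i_lt d
      split_ifs with h0
      · simpa using hiq
      · have := dummy_i_lt_qm d (by omega)
        rw [hdh] at this
        simpa using this
    · intro d₁ h₁ d₂ h₂ hf
      rw [mem_Fset] at h₁ h₂
      exact dummy_ext (h₁.1.trans h₂.1.symm) (h₁.2.trans h₂.2.symm) hf
    · intro b hb
      split_ifs at hb with h0
      · rw [Finset.mem_range] at hb
        exact ⟨mkD qp qm h t b ht hb (by omega), by rw [mem_Fset]; exact ⟨rfl, rfl⟩, rfl⟩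
      · rw [Finset.mem_range] at hb
        exact ⟨mkD qp qm h t b ht (lt_of_lt_of_le hb hq) (fun _ => hb),
          by rw [mem_Fset]; exact ⟨rfl, rfl⟩, rfl⟩
  rw [hcard]
  split_ifs <;> simp

lemma card_ge {D : Finset (Dummy H 2 qp qm)} {hs0 : Hos H 2 qm}
    (hall : ∀ d ∈ D, M (Sum.inr d) = some hs0) :
    D.card ≤ (mset M hs0).card := by
  apply Finset.card_le_card_of_injOn (fun d => Sum.inr d)
  · exact fun d hd => mem_mset.mpr (hall d hd)
  · exact fun a _ b _ hEq => Sum.inr_injective hEq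

lemma card_plus {D : Finset (Dummy H 2 qp qm)} {hs0 : Hos H 2 qm} {x : Res R H 2 qp qm}
    (hall : ∀ d ∈ D, M (Sum.inr d) = some hs0) (hx : M x = some hs0)
    (hne : ∀ d ∈ D, Sum.inr d ≠ x) :
    D.card + 1 ≤ (mset M hs0).card := by
  have h1 : D.card ≤ ((mset M hs0).filter (fun y => y ≠ x)).card := by
    apply Finset.card_le_card_of_injOn (fun d => Sum.inr d)
    · intro d hd
      exact Finset.mem_filter.mpr ⟨mem_mset.mpr (hall d hd), hne d hd⟩
    · exact fun a _ b _ hEq => Sum.inr_injective hEq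
  have h2 := Finset.card_filter_add_card_filter_not (s := mset M hs0)
      (p := fun y => y ≠ x)
  have h3 : 0 < ((mset M hs0).filter (fun y => ¬ y ≠ x)).card := by
    apply Finset.card_pos.mpr
    exact ⟨x, Finset.mem_filter.mpr ⟨mem_mset.mpr hx, by simp⟩⟩
  omega

lemma cap_eval {h : H} {t : ℕ} (ht : t < ell H 2 qm) :
    cap 2 qp qm ((h, ⟨t, ht⟩) : Hos H 2 qm) = if t < 2 then qp h else qm h := by
  by_cases h2 : t < 2
  · rw [if_pos h2]; exact if_pos h2
  · rw [if_neg h2]; exact if_neg h2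

lemma card_small {hs0 : Hos H 2 qm} {h : H} {u k : ℕ}
    (hmem : ∀ y ∈ mset M hs0, ∃ d' : Dummy H 2 qp qm,
        y = Sum.inr d' ∧ d'.h = h ∧ d'.s = u ∧ d'.i < k) :
    (mset M hs0).card ≤ k := by
  have hle := Finset.card_le_card_of_injOn (s := mset M hs0)
    (f := fun y : Res R H 2 qp qm => match y with | Sum.inl _ => 0 | Sum.inr d' => d'.i)
    (t := Finset.range k) ?_ ?_
  · simpa using hle
  · intro y hy
    obtain ⟨d', rfl, -, -, hik⟩ := hmem y hy
    simpa using hik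
  · intro y₁ hy₁ y₂ hy₂ hf
    obtain ⟨d₁, rfl, hh₁, hs₁, -⟩ := hmem y₁ hy₁
    obtain ⟨d₂, rfl, hh₂, hs₂, -⟩ := hmem y₂ hy₂
    simp only at hf
    exact congrArg Sum.inr (dummy_ext (hh₁.trans hh₂.symm) (hs₁.trans hs₂.symm) hf)

lemma smaller_i {hs0 : Hos H 2 qm} {d d' : Dummy H 2 qp qm}
    (hnp : ¬ prefHos 2 qp qm rankH hs0 (Sum.inr d) (Sum.inr d'))
    (hcd : hclass (R := R) (qp := qp) hs0 (Sum.inr d) = 2)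
    (hcd' : hclass (R := R) (qp := qp) hs0 (Sum.inr d') = 2)
    (hne : d' ≠ d) (hhh : d.h = d'.h) (hss : d.s = d'.s) : d'.i < d.i := by
  unfold prefHos at hnp
  push_neg at hnp
  have h2 := hnp.2 (by rw [hcd, hcd'])
  simp only [hinner] at h2
  have hni : d'.i ≠ d.i := fun hEq => hne (dummy_ext hhh.symm hss.symm hEq)
  omega

/-- Lemma A: if `h^t` (t ≥ 1) is matched to some resident which is not a
level-`(t-1)` dummy of `h`, then some level-`(t-1)` dummy of `h` is matched to `h^{t-1}`. -/
lemma LA (hst : stableRed 2 qp qm E rankR rankH M) (hq : ∀ h, qm h ≤ qp h)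
    (h : H) (t : ℕ) (ht1 : 1 ≤ t) (ht : t < ell H 2 qm)
    (x : Res R H 2 qp qm) (hx : M x = some (h, ⟨t, ht⟩))
    (hcl : hclass (qp := qp) ((h, ⟨t, ht⟩) : Hos H 2 qm) x ≠ 0) :
    ∃ d : Dummy H 2 qp qm, d.h = h ∧ d.s = t - 1 ∧
      ∃ hs : Hos H 2 qm, hs.1 = h ∧ hs.2.val = t - 1 ∧ M (Sum.inr d) = some hs := by
  by_contra hcon
  push_neg at hcon
  have hall : ∀ d ∈ Dset qp qm h (t - 1),
      M (Sum.inr d) = some ((h, ⟨t, ht⟩) : Hos H 2 qm) := by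
    intro d hd
    rw [mem_Dset] at hd
    obtain ⟨hdh, hds, hdi⟩ := hd
    cases hM : M (Sum.inr d) with
    | none =>
      exfalso
      have he : edge 2 qp qm E (Sum.inr d) ((h, ⟨t, ht⟩) : Hos H 2 qm) := by
        refine ⟨hdh, Or.inr ⟨show t = d.s + 1 by omega, ?_⟩⟩
        rintro ⟨hs1, hilt⟩
        have hds1 : d.s = 1 := hs1
        have hile : d.i < qp h - qm h := hilt
        have := hdi (by omega)
        omega
      have hnb := nb hst he (by intro hs' hM'; rw [hM] at hM'; cases hM')
      refine hnb.2 x (mem_mset.mpr hx) (Or.inl ?_)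
      erw [hclass_inr_zero (hs := ((h, ⟨t, ht⟩) : Hos H 2 qm)) hdh ht1 hds]
      exact Nat.pos_of_ne_zero hcl
    | some hs' =>
      obtain ⟨hh1, hv⟩ := dummy_opts hst hM
      have hs1h : hs'.1 = h := hh1.symm.trans hdh
      rcases hv with hv | hv
      · exact absurd hM (hcon d hdh hds hs' hs1h (by omega))
      · exact congrArg some (hos_ext hs1h (by omega) ht)
  have hne : ∀ d ∈ Dset qp qm h (t - 1), Sum.inr d ≠ x := by
    intro d hd hEq
    rw [mem_Dset] at hd
    exact hcl (hEq ▸ hclass_inr_zero hd.1 ht1 hd.2.1)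
  have hc1 := card_plus (M := M) hall hx hne
  have hc2 := hst.1.2 ((h, ⟨t, ht⟩) : Hos H 2 qm)
  have hc3 := card_Dset (qp := qp) (h := h) (t := t - 1) (hq h) (by omega)
  rw [cap_eval ht] at hc2
  split_ifs at hc2 with hA <;> split_ifs at hc3 with hB <;> omega

/-- Downward chain: for every `t ≤ s - 1`, some level-`t` dummy of `h` is matched to `h^t`. -/
lemma LP (hst : stableRed 2 qp qm E rankR rankH M) (hq : ∀ h, qm h ≤ qp h)
    (h : H) (s : Fin (ell H 2 qm)) (r₀ : R) (hr : M (Sum.inl r₀) = some (h, s)) :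
    ∀ t : ℕ, t + 1 ≤ s.val → ∃ d : Dummy H 2 qp qm, d.h = h ∧ d.s = t ∧
      ∃ hs : Hos H 2 qm, hs.1 = h ∧ hs.2.val = t ∧ M (Sum.inr d) = some hs := by
  have key : ∀ n t : ℕ, t + 1 + n = s.val →
      ∃ d : Dummy H 2 qp qm, d.h = h ∧ d.s = t ∧
        ∃ hs : Hos H 2 qm, hs.1 = h ∧ hs.2.val = t ∧ M (Sum.inr d) = some hs := by
    intro n
    induction n with
    | zero =>
      intro t hts
      have ht : t + 1 < ell H 2 qm := by have := s.isLt; omega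
      have hse : ((h, s) : Hos H 2 qm) = (h, ⟨t + 1, ht⟩) := hos_ext rfl (show s.val = t + 1 by omega) ht
      have := LA hst hq h (t + 1) (by omega) ht (Sum.inl r₀) (by rw [← hse]; exact hr)
        (by erw [hclass_inl]; omega)
      simpa using this
    | succ n ih =>
      intro t hts
      obtain ⟨d, hdh, hds, hs1, hh1, hh2, hM⟩ := ih (t + 1) (by omega)
      have ht : t + 1 < ell H 2 qm := by have := s.isLt; omega
      have hse : hs1 = ((h, ⟨t + 1, ht⟩) : Hos H 2 qm) := hos_ext hh1 hh2 ht
      have := LA hst hq h (t + 1) (by omega) ht (Sum.inr d) (by rw [← hse]; exact hM)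
        (by erw [hclass_inr_two hdh hds]; omega)
      simpa using this
  intro t h1
  exact key (s.val - (t + 1)) t (by omega)

/-- No original resident is matched to `h^t` for `t ≤ s - 2`. -/
lemma Lc (hst : stableRed 2 qp qm E rankR rankH M) (hq : ∀ h, qm h ≤ qp h)
    (h : H) (s : Fin (ell H 2 qm)) (r₀ : R) (hr : M (Sum.inl r₀) = some (h, s)) :
    ∀ t : ℕ, t + 2 ≤ s.val → ∀ r' : R, ∀ hs : Hos H 2 qm, hs.1 = h → hs.2.val = t →
      M (Sum.inl r') ≠ some hs := by
  intro t ht2 r' hs hh1 hh2 hM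
  have ht : t + 1 < ell H 2 qm := by have := s.isLt; omega
  have hE : E r' h := by
    have he := hst.1.1 _ _ hM
    simp only [edge] at he
    rwa [hh1] at he
  have he : edge 2 qp qm E (Sum.inl r') ((h, ⟨t + 1, ht⟩) : Hos H 2 qm) := hE
  have hp : ∀ hs', M (Sum.inl r') = some hs' →
      prefRes 2 qp qm rankR (Sum.inl r') ((h, ⟨t + 1, ht⟩) : Hos H 2 qm) hs' := by
    intro hs' hM'
    rw [hM] at hM'
    injection hM' with hM''
    subst hM''
    exact Or.inl (show hs.2.val < t + 1 by omega)
  have hnb := nb hst he hp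
  obtain ⟨d, hdh, hds, hs1, h1, h2, hMd⟩ := LP hst hq h s r₀ hr (t + 1) (by omega)
  have hse : hs1 = ((h, ⟨t + 1, ht⟩) : Hos H 2 qm) := hos_ext h1 h2 ht
  refine hnb.2 (Sum.inr d) (mem_mset.mpr (by rw [← hse]; exact hMd)) (Or.inl ?_)
  erw [hclass_inl, hclass_inr_two hdh hds]
  omega

/-- No level-`(t-1)` dummy of `h` is matched to `h^t` for `t ≤ s - 1`. -/
lemma Ln (hst : stableRed 2 qp qm E rankR rankH M) (hq : ∀ h, qm h ≤ qp h)
    (h : H) (s : Fin (ell H 2 qm)) (r₀ : R) (hr : M (Sum.inl r₀) = some (h, s)) :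
    ∀ t : ℕ, t + 1 ≤ s.val → ∀ d : Dummy H 2 qp qm, d.h = h → d.s + 1 = t →
      ∀ hs : Hos H 2 qm, hs.1 = h → hs.2.val = t → M (Sum.inr d) ≠ some hs := by
  intro t
  induction t using Nat.strong_induction_on with
  | _ t ih =>
    intro ht1 d hdh hds hs hh1 hh2 hM
    have htl : t - 1 < ell H 2 qm := by have := s.isLt; omega
    have he : edge 2 qp qm E (Sum.inr d) ((h, ⟨t - 1, htl⟩) : Hos H 2 qm) :=
      ⟨hdh, Or.inl (show t - 1 = d.s by omega)⟩
    have hp : ∀ hs', M (Sum.inr d) = some hs' →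
        prefRes 2 qp qm rankR (Sum.inr d) ((h, ⟨t - 1, htl⟩) : Hos H 2 qm) hs' := by
      intro hs' hM'
      rw [hM] at hM'
      injection hM' with hM''
      subst hM''
      show dkey d ((h, ⟨t - 1, htl⟩) : Hos H 2 qm) < dkey d hs
      have h0 : dkey d ((h, ⟨t - 1, htl⟩) : Hos H 2 qm) = 0 := by
        unfold dkey
        rw [if_pos ⟨hdh.symm, show t - 1 = d.s by omega⟩]
      have h1 : dkey d hs = 1 := by
        unfold dkey
        rw [if_neg, if_pos ⟨hh1.trans hdh.symm, by omega⟩]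
        rintro ⟨-, hv⟩
        have hv' : hs.2.val = d.s := hv
        omega
      omega
    obtain ⟨hfull, hy⟩ := nb hst he hp
    have hmem : ∀ y ∈ mset M ((h, ⟨t - 1, htl⟩) : Hos H 2 qm), ∃ d' : Dummy H 2 qp qm,
        y = Sum.inr d' ∧ d'.h = h ∧ d'.s = t - 1 ∧ d'.i < d.i := by
      intro y hyM
      have hMy := mem_mset.mp hyM
      match y with
      | Sum.inl r' =>
        exact absurd hMy (Lc hst hq h s r₀ hr (t - 1) (by omega) r' _ rfl rfl)
      | Sum.inr d' =>
        obtain ⟨hh1', hv⟩ := dummy_opts hst hMy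
        have hh1'' : d'.h = h := hh1'
        rcases hv with hv | hv
        · have hv' : t - 1 = d'.s := hv
          refine ⟨d', rfl, hh1'', hv'.symm, ?_⟩
          have hne : d' ≠ d := by
            rintro rfl
            rw [hM] at hMy
            injection hMy with hEq
            have h' : hs.2.val = t - 1 := by rw [hEq]
            omega
          refine smaller_i (hy _ hyM) (hclass_inr_two hdh (show d.s = t - 1 by omega))
            (hclass_inr_two hh1'' hv'.symm) hne (hdh.trans hh1''.symm) (by omega)
        · exfalso
          have hv' : t - 1 = d'.s + 1 := hv
          exact ih (t - 1) (by omega) (by omega) d' hh1'' (by omega) _ rfl rfl hMy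
    have hcard := card_small hmem
    have hidlt : d.i < cap 2 qp qm ((h, ⟨t - 1, htl⟩) : Hos H 2 qm) := by
      rw [cap_eval htl]
      split_ifs with hA
      · exact hdh ▸ dummy_i_lt d
      · exact hdh ▸ dummy_i_lt_qm d (by omega)
    omega

/-- Every level-`t` dummy of `h` is matched to `h^t` for `t ≤ s - 2`. -/
lemma Lm (hst : stableRed 2 qp qm E rankR rankH M) (hq : ∀ h, qm h ≤ qp h)
    (h : H) (s : Fin (ell H 2 qm)) (r₀ : R) (hr : M (Sum.inl r₀) = some (h, s)) :
    ∀ t : ℕ, t + 2 ≤ s.val → ∀ d : Dummy H 2 qp qm, d.h = h → d.s = t →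
      ∃ hs : Hos H 2 qm, hs.1 = h ∧ hs.2.val = t ∧ M (Sum.inr d) = some hs := by
  intro t ht2 d hdh hds
  cases hM : M (Sum.inr d) with
  | some hs' =>
    obtain ⟨hh1, hv⟩ := dummy_opts hst hM
    have hs1h : hs'.1 = h := hh1.symm.trans hdh
    rcases hv with hv | hv
    · exact ⟨hs', hs1h, by omega, rfl⟩
    · exact absurd hM (Ln hst hq h s r₀ hr (t + 1) (by omega) d hdh (by omega) hs' hs1h (by omega))
  | none =>
    exfalso
    have htl : t < ell H 2 qm := by have := s.isLt; omega
    have he : edge 2 qp qm E (Sum.inr d) ((h, ⟨t, htl⟩) : Hos H 2 qm) :=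
      ⟨hdh, Or.inl (show t = d.s by omega)⟩
    obtain ⟨hfull, hy⟩ := nb hst he (by intro hs' hM'; rw [hM] at hM'; cases hM')
    have hmem : ∀ y ∈ mset M ((h, ⟨t, htl⟩) : Hos H 2 qm), ∃ d' : Dummy H 2 qp qm,
        y = Sum.inr d' ∧ d'.h = h ∧ d'.s = t ∧ d'.i < d.i := by
      intro y hyM
      have hMy := mem_mset.mp hyM
      match y with
      | Sum.inl r' =>
        exact absurd hMy (Lc hst hq h s r₀ hr t ht2 r' _ rfl rfl)
      | Sum.inr d' =>
        obtain ⟨hh1', hv⟩ := dummy_opts hst hMy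
        have hh1'' : d'.h = h := hh1'
        rcases hv with hv | hv
        · have hv' : t = d'.s := hv
          refine ⟨d', rfl, hh1'', hv'.symm, ?_⟩
          have hne : d' ≠ d := by
            rintro rfl
            rw [hM] at hMy
            cases hMy
          refine smaller_i (hy _ hyM) (hclass_inr_two hdh (show d.s = t by omega))
            (hclass_inr_two hh1'' hv'.symm) hne (hdh.trans hh1''.symm) (by omega)
        · have hv' : t = d'.s + 1 := hv
          exact absurd hMy (Ln hst hq h s r₀ hr t (by omega) d' hh1'' (by omega) _ rfl rfl)
    have hcard := card_small hmem
    have hidlt : d.i < cap 2 qp qm ((h, ⟨t, htl⟩) : Hos H 2 qm) := by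
      rw [cap_eval htl]
      split_ifs with hA
      · exact hdh ▸ dummy_i_lt d
      · exact hdh ▸ dummy_i_lt_qm d (by omega)
    omega

/-- r₀-argument: every copy above level `s` is full and prefers all its residents to `r₀`. -/
lemma Lr (hst : stableRed 2 qp qm E rankR rankH M)
    (h : H) (s : Fin (ell H 2 qm)) (r₀ : R) (hr : M (Sum.inl r₀) = some (h, s))
    (t : ℕ) (hstt : s.val < t) (ht : t < ell H 2 qm) :
    cap 2 qp qm ((h, ⟨t, ht⟩) : Hos H 2 qm) ≤ (mset M ((h, ⟨t, ht⟩) : Hos H 2 qm)).card ∧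
      ∀ y ∈ mset M ((h, ⟨t, ht⟩) : Hos H 2 qm),
        ¬ prefHos 2 qp qm rankH ((h, ⟨t, ht⟩) : Hos H 2 qm) (Sum.inl r₀) y := by
  apply nb hst
  · have he := hst.1.1 _ _ hr
    simp only [edge] at he
    exact he
  · intro hs' hM'
    rw [hr] at hM'
    injection hM' with hM''
    subst hM''
    exact Or.inl hstt

/-- No level-`t` dummy of `h` is matched to `h^t` for `t > s`. -/
lemma no_lvl (hst : stableRed 2 qp qm E rankR rankH M)
    (h : H) (s : Fin (ell H 2 qm)) (r₀ : R) (hr : M (Sum.inl r₀) = some (h, s))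
    (t : ℕ) (hstt : s.val < t) :
    ∀ d : Dummy H 2 qp qm, d.h = h → d.s = t → ∀ hs : Hos H 2 qm, hs.1 = h →
      hs.2.val = t → M (Sum.inr d) ≠ some hs := by
  intro d hdh hds hs hh1 hh2 hM
  have ht : t < ell H 2 qm := hh2 ▸ hs.2.isLt
  have hse : hs = ((h, ⟨t, ht⟩) : Hos H 2 qm) := hos_ext hh1 hh2 ht
  refine (Lr hst h s r₀ hr t hstt ht).2 (Sum.inr d)
    (mem_mset.mpr (by rw [← hse]; exact hM)) (Or.inl ?_)
  erw [hclass_inl, hclass_inr_two hdh hds]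
  omega

/-- No original resident is matched to `h^t` for `t ≥ s + 2`. -/
lemma Lcc (hst : stableRed 2 qp qm E rankR rankH M) (hq : ∀ h, qm h ≤ qp h)
    (h : H) (s : Fin (ell H 2 qm)) (r₀ : R) (hr : M (Sum.inl r₀) = some (h, s))
    (t : ℕ) (ht2 : s.val + 2 ≤ t) (ht : t < ell H 2 qm) :
    ∀ r' : R, M (Sum.inl r') ≠ some ((h, ⟨t, ht⟩) : Hos H 2 qm) := by
  intro r' hM
  have hex : ∃ d ∈ Dset qp qm h (t - 1), M (Sum.inr d) = none := by
    by_contra hcon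
    push_neg at hcon
    have hall : ∀ d ∈ Dset qp qm h (t - 1),
        M (Sum.inr d) = some ((h, ⟨t, ht⟩) : Hos H 2 qm) := by
      intro d hd
      have hd' := mem_Dset.mp hd
      cases hM' : M (Sum.inr d) with
      | none => exact absurd hM' (hcon d hd)
      | some hs' =>
        obtain ⟨hh1, hv⟩ := dummy_opts hst hM'
        have hs1h : hs'.1 = h := hh1.symm.trans hd'.1
        rcases hv with hv | hv
        · exact absurd hM' (no_lvl hst h s r₀ hr (t - 1) (by omega) d hd'.1 hd'.2.1 hs'
            hs1h (by omega))
        · exact congrArg some (hos_ext hs1h (by omega) ht)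
    have hne : ∀ d ∈ Dset qp qm h (t - 1), Sum.inr d ≠ (Sum.inl r' : Res R H 2 qp qm) := by
      intro d _ hEq
      cases hEq
    have hc1 := card_plus (M := M) hall hM hne
    have hc2 := hst.1.2 ((h, ⟨t, ht⟩) : Hos H 2 qm)
    have hc3 := card_Dset (qp := qp) (h := h) (t := t - 1) (hq h) (by omega)
    rw [cap_eval ht] at hc2
    split_ifs at hc2 with hA <;> split_ifs at hc3 with hB <;> omega
  obtain ⟨d, hd, hMd⟩ := hex
  rw [mem_Dset] at hd
  have he : edge 2 qp qm E (Sum.inr d) ((h, ⟨t, ht⟩) : Hos H 2 qm) := by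
    refine ⟨hd.1, Or.inr ⟨show t = d.s + 1 by omega, ?_⟩⟩
    rintro ⟨h1', h2'⟩
    have hds1 : d.s = 1 := h1'
    have hile : d.i < qp h - qm h := h2'
    have := hd.2.2 (by omega)
    omega
  obtain ⟨-, hy⟩ := nb hst he (by intro hs' hM''; rw [hMd] at hM''; cases hM'')
  refine hy (Sum.inl r') (mem_mset.mpr hM) (Or.inl ?_)
  erw [hclass_inl, hclass_inr_zero hd.1 (show 1 ≤ t by omega) (show d.s = t - 1 by omega)]
  omega

end Aux

/-- Let `M` be a stable matching of the reduced HR instance `G'` and suppose the level-`s`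
copy `h^s` of hospital `h` is active.  Then: (a) if `s ≥ 1`, at least one position of
`h^{s-1}` is matched to a level-`(s-1)` dummy resident of `h`; (b) for `j ≤ s - 2`, the copy
`h^j` is inactive and all its positions are matched to level-`j` dummy residents of `h`;
(c) for `j ≥ s + 2`, the copy `h^j` is inactive and all its positions are matched to
level-`(j-1)` dummy residents of `h`. -/
theorem statement6 {R H : Type} [Fintype R] [Fintype H]
    (E : R → H → Prop) (rankR : R → H → ℕ) (rankH : H → R → ℕ) (qp qm : H → ℕ)
    (hq : ∀ h, qm h ≤ qp h)
    (M : Res R H 2 qp qm → Option (Hos H 2 qm))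
    (hst : stableRed 2 qp qm E rankR rankH M)
    (h : H) (s : Fin (ell H 2 qm)) (hact : active M (h, s)) :
    -- (a)
    (1 ≤ s.val → ∃ s' : Fin (ell H 2 qm), s'.val = s.val - 1 ∧
      ∃ d : Dummy H 2 qp qm, d.h = h ∧ d.s = s.val - 1 ∧ M (Sum.inr d) = some (h, s')) ∧
    -- (b)
    (∀ j : Fin (ell H 2 qm), j.val + 2 ≤ s.val →
      ¬ active M (h, j) ∧ (mset M (h, j)).card = cap 2 qp qm (h, j) ∧
        ∀ x ∈ mset M (h, j), ∃ d : Dummy H 2 qp qm,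
          x = Sum.inr d ∧ d.h = h ∧ d.s = j.val) ∧
    -- (c)
    (∀ j : Fin (ell H 2 qm), s.val + 2 ≤ j.val →
      ¬ active M (h, j) ∧ (mset M (h, j)).card = cap 2 qp qm (h, j) ∧
        ∀ x ∈ mset M (h, j), ∃ d : Dummy H 2 qp qm,
          x = Sum.inr d ∧ d.h = h ∧ d.s = j.val - 1) := by
  obtain ⟨r₀, hr⟩ := hact
  refine ⟨?_, ?_, ?_⟩
  · -- (a)
    intro hs1
    obtain ⟨d, hdh, hds, hs', a, b, c⟩ := LA hst hq h s.val hs1 s.isLt (Sum.inl r₀)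
      hr (by erw [hclass_inl]; omega)
    refine ⟨hs'.2, b, d, hdh, hds, ?_⟩
    have hpe : hs' = (h, hs'.2) := by rw [← a]; rfl
    rw [← hpe]
    exact c
  · -- (b)
    intro j hj
    refine ⟨?_, ?_, ?_⟩
    · rintro ⟨r', hr'⟩
      exact Lc hst hq h s r₀ hr j.val hj r' (h, j) rfl rfl hr'
    · apply le_antisymm (hst.1.2 _)
      have hall : ∀ d ∈ Fset qp qm h j.val, M (Sum.inr d) = some ((h, j) : Hos H 2 qm) := by
        intro d hd
        rw [mem_Fset] at hd
        obtain ⟨hs', a, b, c⟩ := Lm hst hq h s r₀ hr j.val hj d hd.1 hd.2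
        rw [c]
        exact congrArg some (hos_ext a b j.isLt)
      have hjl : j.val ≤ ell H 2 qm - 2 := by
        have := s.isLt; have := two_le_ell (H := H) (qm := qm); omega
      have hc1 := card_ge (M := M) hall
      have hcj : cap 2 qp qm (h, j) = if j.val < 2 then qp h else qm h := cap_eval j.isLt
      have hcf := card_Fset (qp := qp) (h := h) (t := j.val) (hq h) hjl
      rw [hcj]
      split_ifs at hcf ⊢ with h2 <;> omega
    · intro x hx
      have hMx := mem_mset.mp hx
      match x with
      | Sum.inl r' =>
        exact absurd hMx (Lc hst hq h s r₀ hr j.val hj r' _ rfl rfl)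
      | Sum.inr d =>
        obtain ⟨hh1, hv⟩ := dummy_opts hst hMx
        have hh1' : d.h = h := hh1
        rcases hv with hv | hv
        · have hv' : j.val = d.s := hv
          exact ⟨d, rfl, hh1', hv'.symm⟩
        · have hv' : j.val = d.s + 1 := hv
          exact absurd hMx (Ln hst hq h s r₀ hr j.val (by omega) d hh1' (by omega) _ rfl rfl)
  · -- (c)
    intro j hj
    refine ⟨?_, ?_, ?_⟩
    · rintro ⟨r', hr'⟩
      exact Lcc hst hq h s r₀ hr j.val hj j.isLt r' hr'
    · exact le_antisymm (hst.1.2 _) (Lr hst h s r₀ hr j.val (by omega) j.isLt).1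
    · intro x hx
      have hMx := mem_mset.mp hx
      match x with
      | Sum.inl r' =>
        exact absurd hMx (Lcc hst hq h s r₀ hr j.val hj j.isLt r')
      | Sum.inr d =>
        obtain ⟨hh1, hv⟩ := dummy_opts hst hMx
        have hh1' : d.h = h := hh1
        rcases hv with hv | hv
        · have hv' : j.val = d.s := hv
          exact absurd hMx (no_lvl hst h s r₀ hr j.val (by omega) d hh1' hv'.symm _ rfl rfl)
        · have hv' : j.val = d.s + 1 := hv
          exact ⟨d, rfl, hh1', by omega⟩
end

section
/- In any stable matching M' of the reduced HR instance G', for every hospital h of the original instance, at most two level copies of h are active, and if two are active they are at consecutive levels s and s+1. -/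
open Finset

attribute [local instance] Classical.propDecidable

open HRLQ Finset

/-- In any stable matching `M` of the reduced HR instance `G'`, at most two level copies of
any hospital `h` are active, and active copies are at consecutive levels. -/
theorem statement7 {R H : Type} [Fintype R] [Fintype H]
    (E : R → H → Prop) (rankR : R → H → ℕ) (rankH : H → R → ℕ) (qp qm : H → ℕ)
    (hq : ∀ h, qm h ≤ qp h)
    (M : Res R H 2 qp qm → Option (Hos H 2 qm))
    (hst : stableRed 2 qp qm E rankR rankH M)
    (h : H) (s s' : Fin (ell H 2 qm))
    (h1 : active M (h, s)) (h2 : active M (h, s')) (hle : s.val ≤ s'.val) :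
    s'.val ≤ s.val + 1 := by
  by_contra hcon
  push_neg at hcon
  obtain ⟨r', hr'⟩ := h2
  obtain ⟨r0, hr0⟩ := h1
  obtain ⟨⟨hedge, hcap⟩, hstab⟩ := hst
  have hs2 : 2 ≤ s'.val := by omega
  have hcapv : cap 2 qp qm (h, s') = qm h := by
    simp only [cap]
    rw [if_neg (by omega)]
  have hmem' : Sum.inl r' ∈ mset M (h, s') := by
    unfold mset; exact Multiset.mem_filter_of_mem (Finset.mem_univ _) hr'
  have hmemx : ∀ x, M x = some (h, s') → x ∈ mset M (h, s') := by
    intro x hx; unfold mset; exact Multiset.mem_filter_of_mem (Finset.mem_univ _) hx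
  have hqm1 : 1 ≤ qm h := by
    have h1c := hcap (h, s')
    rw [hcapv] at h1c
    have h2c : 1 ≤ (mset M (h, s')).card := Finset.card_pos.mpr ⟨_, hmem'⟩
    omega
  have hLs : s'.val < ell H 2 qm := s'.2
  have hqpm : qm h ≤ qp h := hq h
  have hlt : s'.val - 1 < ell H 2 qm := by omega
  set t : Fin (ell H 2 qm) := ⟨s'.val - 1, hlt⟩ with ht
  have hL2 : s'.val - 1 ≤ ell H 2 qm - 2 := by omega
  let idx : Fin (qm h) → ℕ := fun i => if s'.val = 2 then qp h - qm h + i.val else i.val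
  have hidxlt : ∀ i, idx i < qp h := by
    intro i; have := i.2; simp only [idx]; split <;> omega
  let d : Fin (qm h) → Dummy H 2 qp qm := fun i =>
    ⟨⟨h, (t, ⟨idx i, hidxlt i⟩)⟩, by
      refine ⟨hL2, ?_⟩
      intro hT
      have hT' : 2 ≤ s'.val - 1 := hT
      have := i.2
      simp only [idx]
      split <;> omega⟩
  have hdh : ∀ i, Dummy.h (d i) = h := fun _ => rfl
  have hds : ∀ i, Dummy.s (d i) = s'.val - 1 := fun _ => rfl
  have hdi : ∀ i, Dummy.i (d i) = idx i := fun _ => rfl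
  -- each of these dummies must be matched to (h, t) or (h, s')
  have hdmatch : ∀ i, M (Sum.inr (d i)) = some (h, t) ∨ M (Sum.inr (d i)) = some (h, s') := by
    intro i
    have hnb := hstab (Sum.inr (d i)) (h, s')
    have hA : edge 2 qp qm E (Sum.inr (d i)) (h, s') := by
      refine ⟨hdh i, Or.inr ⟨?_, ?_⟩⟩
      · show s'.val = Dummy.s (d i) + 1
        rw [hds i]; omega
      · rw [hds i, hdi i]
        rintro ⟨he1, he2⟩
        simp only [idx] at he2
        rw [if_pos (by omega)] at he2
        omega
    have hclr' : hclass (h, s') (Sum.inl r' : Res R H 2 qp qm) = 1 := rfl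
    have hcld : hclass (h, s') (Sum.inr (d i) : Res R H 2 qp qm) = 0 := by
      simp only [hclass]
      rw [if_pos ⟨hdh i, by omega, by rw [hds i]⟩]
    have hC : (mset M (h, s')).card < cap 2 qp qm (h, s') ∨
        ∃ y ∈ mset M (h, s'), prefHos 2 qp qm rankH (h, s') (Sum.inr (d i)) y := by
      right
      exact ⟨Sum.inl r', hmem', Or.inl (by rw [hclr', hcld]; omega)⟩
    have hB : ¬ ∀ hs', M (Sum.inr (d i)) = some hs' →
        prefRes 2 qp qm rankR (Sum.inr (d i)) (h, s') hs' := fun hB => hnb ⟨hA, hB, hC⟩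
    push_neg at hB
    obtain ⟨hs', hMe, hnp⟩ := hB
    have hkey1 : dkey (d i) (h, s') = 1 := by
      simp only [dkey]
      rw [if_neg (by rw [hds i]; rintro ⟨-, he⟩; omega),
        if_pos ⟨hdh i ▸ rfl, by rw [hds i]; omega⟩]
    simp only [prefRes, hkey1] at hnp
    push_neg at hnp
    simp only [dkey] at hnp
    by_cases hc1 : hs'.1 = Dummy.h (d i) ∧ hs'.2.val = Dummy.s (d i)
    · left
      rw [hMe]
      obtain ⟨he1, he2⟩ := hc1
      rw [hdh i] at he1
      rw [hds i] at he2
      have : hs' = ((h, t) : Hos H 2 qm) := Prod.ext_iff.mpr ⟨he1, Fin.ext he2⟩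
      rw [this]
      rfl
    · by_cases hc2 : hs'.1 = Dummy.h (d i) ∧ hs'.2.val = Dummy.s (d i) + 1
      · right
        rw [hMe]
        obtain ⟨he1, he2⟩ := hc2
        rw [hdh i] at he1
        rw [hds i] at he2
        have : hs' = ((h, s') : Hos H 2 qm) := Prod.ext_iff.mpr ⟨he1, Fin.ext (show hs'.2.val = s'.val by omega)⟩
        rw [this]
        rfl
      · rw [if_neg hc1, if_neg hc2] at hnp
        omega
  -- not all of them can be matched to (h, s'), so one is matched to (h, t)
  have hex : ∃ i, M (Sum.inr (d i)) = some ((h, t) : Hos H 2 qm) := by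
    by_contra hno
    have hall : ∀ i, M (Sum.inr (d i)) = some (h, s') :=
      fun i => (hdmatch i).resolve_left (fun hc => hno ⟨i, hc⟩)
    have hinj : Function.Injective fun i : Fin (qm h) => (Sum.inr (d i) : Res R H 2 qp qm) := by
      intro i j hij
      have h1 : d i = d j := by
        simpa using hij
      have h2 : idx i = idx j := congrArg (fun x : Dummy H 2 qp qm => x.1.2.2.val) h1
      have := i.2; have := j.2
      simp only [idx] at h2
      apply Fin.ext
      split at h2 <;> omega
    have hsub : insert (Sum.inl r')
        (Finset.image (fun i => (Sum.inr (d i) : Res R H 2 qp qm)) Finset.univ)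
        ⊆ mset M (h, s') := by
      intro x hx
      rcases Finset.mem_insert.mp hx with rfl | hx
      · exact hmem'
      · obtain ⟨i, _, rfl⟩ := Finset.mem_image.mp hx
        exact hmemx _ (hall i)
    have hcard := Finset.card_le_card hsub
    rw [Finset.card_insert_of_notMem (by simp), Finset.card_image_of_injective _ hinj,
      Finset.card_univ, Fintype.card_fin] at hcard
    have hcc := hcap (h, s')
    rw [hcapv] at hcc
    exact absurd (hcard.trans hcc) (by omega)
  obtain ⟨i, hdti⟩ := hex
  -- (r0, (h, t)) is a blocking pair: contradiction
  apply hstab (Sum.inl r0) (h, t)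
  have hE : E r0 h := hedge _ _ hr0
  refine ⟨hE, ?_, ?_⟩
  · intro hs' hM
    rw [hr0] at hM
    have : (h, s) = hs' := by injection hM
    subst this
    left
    show s.val < s'.val - 1
    omega
  · right
    refine ⟨Sum.inr (d i), Finset.mem_filter.mpr ⟨Finset.mem_univ _, hdti⟩, Or.inl ?_⟩
    have hclr0 : hclass (h, t) (Sum.inl r0 : Res R H 2 qp qm) = 1 := rfl
    have hcld : hclass (h, t) (Sum.inr (d i) : Res R H 2 qp qm) = 2 := by
      simp only [hclass]
      rw [if_neg (by
            rintro ⟨-, -, he⟩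
            rw [hds i] at he
            have he' : s'.val - 1 = s'.val - 1 - 1 := he
            omega),
        if_pos ⟨hdh i, by rw [hds i]⟩]
    rw [hclr0, hcld]
    omega
end

section
/- In any stable matching M' of the reduced HR instance G', if a non-dummy resident r is matched to a level-s hospital copy, then no hospital h on r's original preference list has an active copy at level s+2 or higher in M'. -/
open Finset

attribute [local instance] Classical.propDecidable

open HRLQ Finset

/-- In any stable matching `M` of the reduced HR instance `G'`, if a non-dummy resident `r`
is matched to a level-`s` hospital copy, then no hospital `h` on `r`'s original preference
list has an active copy at level `s + 2` or higher. -/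
theorem statement8 {R H : Type} [Fintype R] [Fintype H]
    (E : R → H → Prop) (rankR : R → H → ℕ) (rankH : H → R → ℕ) (qp qm : H → ℕ)
    (hq : ∀ h, qm h ≤ qp h)
    (M : Res R H 2 qp qm → Option (Hos H 2 qm))
    (hst : stableRed 2 qp qm E rankR rankH M)
    (r : R) (hs : Hos H 2 qm) (hm : M (Sum.inl r) = some hs)
    (h : H) (he : E r h) (t : Fin (ell H 2 qm)) (ht : hs.2.val + 2 ≤ t.val) :
    ¬ active M (h, t) := by
  rintro ⟨r', hr'⟩
  obtain ⟨⟨hM1, hM2⟩, hnb⟩ := hst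
  have ht2 : 2 ≤ t.val := by omega
  have htell : t.val < ell H 2 qm := t.2
  have hqmp := hq h
  -- the indices of the level-(t-1) dummies of h that are acceptable to h^t
  let j : Fin (qm h) → ℕ := fun i => if t.val = 2 then qp h - qm h + i.val else i.val
  have hjdef : ∀ i : Fin (qm h),
      j i = if t.val = 2 then qp h - qm h + i.val else i.val := fun _ => rfl
  have hjlt : ∀ i, j i < qp h := by
    intro i
    have hi := i.2
    rw [hjdef]
    split_ifs <;> omega
  -- the level-(t-1) dummies of h acceptable to h^t
  let f : Fin (qm h) → Dummy H 2 qp qm := fun i =>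
    ⟨⟨h, (⟨t.val - 1, by omega⟩, ⟨j i, hjlt i⟩)⟩, by
      refine ⟨?_, fun h3 => ?_⟩
      · show t.val - 1 ≤ ell H 2 qm - 2
        omega
      · have h3' : 2 ≤ t.val - 1 := h3
        show j i < qm h
        have hne : ¬ t.val = 2 := by omega
        have hji := hjdef i
        rw [if_neg hne] at hji
        rw [hji]
        exact i.2⟩
  have hfh : ∀ i, Dummy.h (f i) = h := fun _ => rfl
  have hfs : ∀ i, Dummy.s (f i) = t.val - 1 := fun _ => rfl
  have hfi : ∀ i, Dummy.i (f i) = j i := fun _ => rfl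
  have hmem : (Sum.inl r' : Res R H 2 qp qm) ∈ mset M (h, t) := by
    exact (Finset.mem_filter (α := Res R H 2 qp qm)).mpr ⟨Finset.mem_univ _, hr'⟩
  -- each such dummy is matched to h^{t-1} or h^t
  have key : ∀ i : Fin (qm h),
      ∃ hs' : Hos H 2 qm, M (Sum.inr (f i)) = some hs' ∧ hs'.1 = h ∧
        (hs'.2.val = t.val - 1 ∨ hs'.2.val = t.val) := by
    intro i
    have hedge : edge 2 qp qm E (Sum.inr (f i)) ((h, t) : Hos H 2 qm) := by
      refine ⟨hfh i, Or.inr ⟨?_, ?_⟩⟩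
      · show t.val = Dummy.s (f i) + 1
        rw [hfs i]; omega
      · rintro ⟨hc1, hc2⟩
        have hc1' : t.val - 1 = 2 - 1 := by rw [← hfs i]; exact hc1
        have hc2' : j i < qp h - qm h := by rw [← hfi i]; exact hc2
        have ht2' : t.val = 2 := by omega
        rw [hjdef i, if_pos ht2'] at hc2'
        omega
    have hpref : prefHos 2 qp qm rankH ((h, t) : Hos H 2 qm)
        (Sum.inr (f i)) (Sum.inl r') := by
      left
      have h0 : hclass (R := R) ((h, t) : Hos H 2 qm) (Sum.inr (f i)) = 0 := by
        simp only [hclass]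
        rw [if_pos ⟨hfh i, by show 1 ≤ t.val; omega, by show Dummy.s (f i) = t.val - 1; exact hfs i⟩]
      have h1 : hclass (R := R) (qp := qp) ((h, t) : Hos H 2 qm) (Sum.inl r') = 1 := rfl
      rw [h0, h1]
      omega
    have hnotall : ¬ ∀ hs', M (Sum.inr (f i)) = some hs' →
        prefRes 2 qp qm rankR (Sum.inr (f i)) ((h, t) : Hos H 2 qm) hs' := by
      intro hall
      exact hnb (Sum.inr (f i)) ((h, t) : Hos H 2 qm)
        ⟨hedge, hall, Or.inr ⟨Sum.inl r', hmem, hpref⟩⟩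
    push_neg at hnotall
    obtain ⟨hs', hm', hnp⟩ := hnotall
    have hnp' : ¬ (dkey (f i) ((h, t) : Hos H 2 qm) < dkey (f i) hs') := hnp
    have hd1 : dkey (f i) ((h, t) : Hos H 2 qm) = 1 := by
      simp only [dkey]
      rw [if_neg, if_pos ⟨rfl, by show t.val = Dummy.s (f i) + 1; rw [hfs i]; omega⟩]
      rintro ⟨_, hc⟩
      have hc' : t.val = Dummy.s (f i) := hc
      rw [hfs i] at hc'
      omega
    rw [hd1] at hnp'
    by_cases hc : hs'.1 = Dummy.h (f i) ∧ hs'.2.val = Dummy.s (f i)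
    · refine ⟨hs', hm', ?_, Or.inl ?_⟩
      · rw [hc.1, hfh i]
      · rw [hc.2, hfs i]
    by_cases hc2 : hs'.1 = Dummy.h (f i) ∧ hs'.2.val = Dummy.s (f i) + 1
    · refine ⟨hs', hm', ?_, Or.inr ?_⟩
      · rw [hc2.1, hfh i]
      · have := hc2.2; rw [hfs i] at this; omega
    · exfalso
      have : dkey (f i) hs' = 2 := by simp only [dkey]; rw [if_neg hc, if_neg hc2]
      omega
  by_cases hex : ∃ i : Fin (qm h), ∃ hs' : Hos H 2 qm,
      M (Sum.inr (f i)) = some hs' ∧ hs'.1 = h ∧ hs'.2.val = t.val - 1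
  · -- a dummy matched to h^{t-1}: (r, h^{t-1}) is blocking
    obtain ⟨i, hs', hm', h1', h2'⟩ := hex
    apply hnb (Sum.inl r) hs'
    refine ⟨?_, ?_, Or.inr ⟨Sum.inr (f i), ?_, ?_⟩⟩
    · show E r hs'.1
      rw [h1']; exact he
    · intro hs'' hm''
      have heq : hs = hs'' := by
        rw [hm] at hm''
        exact Option.some.inj hm''
      left
      rw [← heq, h2']
      omega
    · exact (@Finset.mem_filter _ _ _ _ _).mpr ⟨Finset.mem_univ _, hm'⟩
    · left
      have h1 : hclass (R := R) (qp := qp) hs' (Sum.inl r) = 1 := rfl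
      have h2 : hclass (R := R) hs' (Sum.inr (f i)) = 2 := by
        simp only [hclass]
        rw [if_neg, if_pos ⟨by rw [hfh i, h1'], by rw [hfs i, h2']⟩]
        rintro ⟨_, hb, hc⟩
        rw [hfs i, h2'] at hc
        omega
      rw [h1, h2]
      omega
  · -- all these dummies matched to h^t: capacity contradiction
    push_neg at hex
    have hall : ∀ i : Fin (qm h),
        M (Sum.inr (f i)) = some ((h, t) : Hos H 2 qm) := by
      intro i
      obtain ⟨hs', hm', h1', h2'⟩ := key i
      rcases h2' with h2' | h2'
      · exact absurd h2' (hex i hs' hm' h1')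
      · have : hs' = ((h, t) : Hos H 2 qm) := Prod.ext h1' (Fin.ext h2')
        rw [← this]; exact hm'
    have hinj : Function.Injective
        (fun i : Fin (qm h) => (Sum.inr (f i) : Res R H 2 qp qm)) := by
      intro a b hab
      simp only [Sum.inr.injEq] at hab
      have hji : j a = j b := congrArg Dummy.i hab
      rw [hjdef a, hjdef b] at hji
      have ha := a.2
      have hb := b.2
      apply Fin.ext
      split_ifs at hji <;> omega
    have hsub : insert (Sum.inl r' : Res R H 2 qp qm)
        (univ.image (fun i : Fin (qm h) => (Sum.inr (f i) : Res R H 2 qp qm)))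
        ⊆ mset M ((h, t) : Hos H 2 qm) := by
      intro x hx
      simp only [mem_insert, mem_image, mem_univ, true_and] at hx
      rcases hx with rfl | ⟨i, rfl⟩
      · exact hmem
      · exact (Finset.mem_filter (α := Res R H 2 qp qm)).mpr ⟨Finset.mem_univ _, hall i⟩
    have h1 : (univ.image
        (fun i : Fin (qm h) => (Sum.inr (f i) : Res R H 2 qp qm))).card = qm h := by
      rw [card_image_of_injective _ hinj, card_univ, Fintype.card_fin]
    have h2 : (Sum.inl r' : Res R H 2 qp qm) ∉
        univ.image (fun i : Fin (qm h) => (Sum.inr (f i) : Res R H 2 qp qm)) := by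
      simp
    have hcard : qm h + 1 ≤ (mset M ((h, t) : Hos H 2 qm)).card := by
      have := card_le_card hsub
      rwa [card_insert_of_notMem h2, h1] at this
    have hcap := hM2 ((h, t) : Hos H 2 qm)
    have hcapv : cap 2 qp qm ((h, t) : Hos H 2 qm) = qm h := by
      simp only [cap]
      rw [if_neg (by simp; omega)]
    omega
end

section
/- Let M = map(M') where M' is a stable matching in the reduced HR instance G'. If the HRLQ instance G admits a feasible matching, then M is feasible for G, i.e., every hospital h satisfies q^-(h) ≤ |M(h)| ≤ q^+(h). -/
open Finset

attribute [local instance] Classical.propDecidable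

open HRLQ Finset

namespace HRLQ

section Aux

set_option linter.unusedSectionVars false

variable {R H : Type} [Fintype R] [Fintype H]
variable {E : R → H → Prop} {rankR : R → H → ℕ} {rankH : H → R → ℕ} {qp qm : H → ℕ}

lemma two_le_ell : 2 ≤ ell H 2 qm := Nat.le_add_right 2 _

/-- Original residents matched to the copy `c`. -/
noncomputable def origs (M : Res R H 2 qp qm → Option (Hos H 2 qm)) (c : Hos H 2 qm) :
    Finset R := univ.filter fun r => M (Sum.inl r) = some c

/-- Dummies matched to the copy `c`. -/
noncomputable def dumTo (M : Res R H 2 qp qm → Option (Hos H 2 qm)) (c : Hos H 2 qm) :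
    Finset (Dummy H 2 qp qm) := univ.filter fun d => M (Sum.inr d) = some c

/-- Dummies of `g` at level `s` that are acceptable to the copy `g^{s+1}`. -/
noncomputable def capa (qp qm : H → ℕ) (g : H) (s : ℕ) : Finset (Dummy H 2 qp qm) :=
  univ.filter fun d => d.h = g ∧ d.s = s ∧ (s = 1 → qp g - qm g ≤ d.i)

lemma mem_mset {M : Res R H 2 qp qm → Option (Hos H 2 qm)} {x c} :
    x ∈ mset M c ↔ M x = some c := by simp [mset]

lemma mem_origs {M : Res R H 2 qp qm → Option (Hos H 2 qm)} {r c} :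
    r ∈ origs M c ↔ M (Sum.inl r) = some c := by simp [origs]

lemma mem_dumTo {M : Res R H 2 qp qm → Option (Hos H 2 qm)} {d c} :
    d ∈ dumTo M c ↔ M (Sum.inr d) = some c := by simp [dumTo]

lemma mem_capa {g s} {d : Dummy H 2 qp qm} :
    d ∈ capa qp qm g s ↔ d.h = g ∧ d.s = s ∧ (s = 1 → qp g - qm g ≤ d.i) := by simp [capa]

lemma mem_msetO_map {M : Res R H 2 qp qm → Option (Hos H 2 qm)} {r g} :
    r ∈ msetO (mapToG M) g ↔ ∃ t, M (Sum.inl r) = some (g, t) := by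
  refine Iff.trans (Finset.mem_filter.trans ((and_iff_right (mem_univ r)).trans Option.map_eq_some_iff)) ?_
  constructor
  · rintro ⟨c, hc, rfl⟩; exact ⟨c.2, hc⟩
  · rintro ⟨t, ht⟩; exact ⟨(g, t), ht, rfl⟩

lemma cap_pair (qp qm : H → ℕ) (g : H) (t : Fin (ell H 2 qm)) :
    cap 2 qp qm (g, t) = if t.val < 2 then qp g else qm g := rfl

lemma dummy_ext {d e : Dummy H 2 qp qm} (h1 : d.h = e.h) (h2 : d.s = e.s) (h3 : d.i = e.i) :
    d = e := by
  obtain ⟨⟨dh, ds, di⟩, hd⟩ := d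
  obtain ⟨⟨eh, es, ei⟩, he⟩ := e
  simp only [Dummy.h, Dummy.s, Dummy.i] at h1 h2 h3
  subst h1
  apply Subtype.ext
  simp only
  congr 1
  exact Prod.ext (Fin.ext h2) (Fin.ext h3)

lemma mset_card (M : Res R H 2 qp qm → Option (Hos H 2 qm)) (c : Hos H 2 qm) :
    (mset M c).card = (origs M c).card + (dumTo M c).card := by
  classical
  have h1 : (mset M c) = ((origs M c).disjSum (dumTo M c) : Finset (R ⊕ Dummy H 2 qp qm)) := by
    ext x
    erw [Finset.mem_disjSum]
    cases x with
    | inl r =>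
      simp only [mset, origs, mem_filter, mem_univ, true_and]
      constructor
      · intro hx; exact Or.inl ⟨r, mem_mset.1 hx, rfl⟩
      · rintro (⟨a, ha, h⟩ | ⟨a, _, h⟩)
        · cases h; exact mem_mset.2 ha
        · cases h
    | inr d =>
      simp only [mset, dumTo, mem_filter, mem_univ, true_and]
      constructor
      · intro hx; exact Or.inr ⟨d, mem_mset.1 hx, rfl⟩
      · rintro (⟨a, _, h⟩ | ⟨a, ha, h⟩)
        · cases h
        · cases h; exact mem_mset.2 ha
  erw [h1, Finset.card_disjSum]

/-- Construct a dummy of `g` at level `s` with index `i`. -/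
def mkD (g : H) (s i : ℕ) (hs : s ≤ ell H 2 qm - 2) (hi : i < qp g)
    (him : 2 ≤ s → i < qm g) : Dummy H 2 qp qm :=
  ⟨⟨g, (⟨s, by have := two_le_ell (H := H) (qm := qm); omega⟩, ⟨i, hi⟩)⟩, ⟨hs, him⟩⟩

@[simp] lemma mkD_h (g : H) (s i hs hi him) : (mkD (qp := qp) (qm := qm) g s i hs hi him).h = g := rfl
@[simp] lemma mkD_s (g : H) (s i hs hi him) : (mkD (qp := qp) (qm := qm) g s i hs hi him).s = s := rfl
@[simp] lemma mkD_i (g : H) (s i hs hi him) : (mkD (qp := qp) (qm := qm) g s i hs hi him).i = i := rfl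

/-- There is a set of `k` dummies of `g` at level `s` with indices `lo, …, lo+k-1`. -/
lemma exists_dums (g : H) (s lo k : ℕ) (hs2 : s ≤ ell H 2 qm - 2)
    (hbound : ∀ i, i < k → lo + i < qp g ∧ (2 ≤ s → lo + i < qm g)) :
    ∃ D : Finset (Dummy H 2 qp qm), D.card = k ∧
      ∀ d ∈ D, d.h = g ∧ d.s = s ∧ lo ≤ d.i := by
  classical
  refine ⟨(Finset.range k).attach.image
    (fun i => mkD g s (lo + i.1) hs2 (hbound i.1 (mem_range.1 i.2)).1
      (hbound i.1 (mem_range.1 i.2)).2), ?_, ?_⟩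
  · rw [Finset.card_image_of_injOn, Finset.card_attach, Finset.card_range]
    intro a _ b _ hab
    have := congrArg Dummy.i hab
    simp only [mkD_i] at this
    exact Subtype.ext (by omega)
  · intro d hd
    simp only [mem_image] at hd
    obtain ⟨i, _, rfl⟩ := hd
    refine ⟨rfl, rfl, by simp⟩

section Stable

variable (M : Res R H 2 qp qm → Option (Hos H 2 qm))

lemma orig_E (hM : isMatchingRed 2 qp qm E M) {r : R} {c : Hos H 2 qm} (h : M (Sum.inl r) = some c) : E r c.1 :=
  hM.1 (Sum.inl r) c h

lemma dum_lv (hM : isMatchingRed 2 qp qm E M) {d : Dummy H 2 qp qm} {c : Hos H 2 qm} (h : M (Sum.inr d) = some c) :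
    d.h = c.1 ∧ (c.2.val = d.s ∨ c.2.val = d.s + 1) := by
  have := hM.1 (Sum.inr d) c h
  simp only [edge] at this
  exact ⟨this.1, this.2.imp id And.left⟩

lemma noblock (hB : ∀ x hs, ¬ blocksRed 2 qp qm E rankR rankH M x hs) {x : Res R H 2 qp qm} {c : Hos H 2 qm}
    (he : edge 2 qp qm E x c)
    (hp : ∀ c', M x = some c' → prefRes 2 qp qm rankR x c c') :
    cap 2 qp qm c ≤ (mset M c).card ∧
      ∀ y ∈ mset M c, ¬ prefHos 2 qp qm rankH c x y := by
  by_contra hcon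
  refine hB x c ⟨he, hp, ?_⟩
  rcases not_and_or.1 hcon with h | h
  · exact Or.inl (not_le.1 h)
  · push_neg at h
    obtain ⟨y, hy, hpref⟩ := h
    exact Or.inr ⟨y, hy, hpref⟩

lemma hclass_inl (c : Hos H 2 qm) (r : R) :
    hclass (qp := qp) c (Sum.inl r) = 1 := rfl

lemma hclass_inr_zero {c : Hos H 2 qm} {d : Dummy H 2 qp qm}
    (h1 : d.h = c.1) (h2 : 1 ≤ c.2.val) (h3 : d.s = c.2.val - 1) :
    hclass (R := R) c (Sum.inr d) = 0 := by
  simp only [hclass]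
  rw [if_pos ⟨h1, h2, h3⟩]

lemma hclass_inr_two {c : Hos H 2 qm} {d : Dummy H 2 qp qm}
    (h1 : d.h = c.1) (h2 : d.s = c.2.val) :
    hclass (R := R) c (Sum.inr d) = 2 := by
  simp only [hclass]
  rw [if_neg (by rintro ⟨-, hle, heq⟩; omega), if_pos ⟨h1, h2⟩]

lemma dkey_zero {d : Dummy H 2 qp qm} {a : Hos H 2 qm}
    (h1 : a.1 = d.h) (h2 : a.2.val = d.s) : dkey d a = 0 := by
  simp only [dkey]
  rw [if_pos ⟨h1, h2⟩]

lemma dkey_pos {d : Dummy H 2 qp qm} {a : Hos H 2 qm}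
    (h : ¬ (a.1 = d.h ∧ a.2.val = d.s)) : 0 < dkey d a := by
  simp only [dkey]
  rw [if_neg h]
  split <;> omega

/-- Every copy at level `≤ ℓ - 2` is full. -/
lemma copy_full (hq : ∀ h, qm h ≤ qp h) (hM : isMatchingRed 2 qp qm E M)
    (hB : ∀ x hs, ¬ blocksRed 2 qp qm E rankR rankH M x hs) (g : H) (t : Fin (ell H 2 qm)) (ht : t.val ≤ ell H 2 qm - 2) :
    cap 2 qp qm (g, t) ≤ (mset M (g, t)).card := by
  classical
  by_contra hu
  have hu' : (mset M (g, t)).card < cap 2 qp qm (g, t) := not_le.1 hu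
  -- every level-`t` dummy of `g` is matched to `(g, t)`
  have hmatch : ∀ d : Dummy H 2 qp qm, d.h = g → d.s = t.val →
      M (Sum.inr d) = some (g, t) := by
    intro d hdh hds
    by_contra hne
    refine hB (Sum.inr d) (g, t) ⟨⟨hdh, Or.inl hds.symm⟩, ?_, Or.inl hu'⟩
    intro c' hc'
    have hlv := dum_lv M hM hc'
    show dkey d (g, t) < dkey d c'
    refine lt_of_eq_of_lt (dkey_zero (a := ((g, t) : Hos H 2 qm)) hdh.symm hds.symm) (dkey_pos ?_)
    rintro ⟨he1, he2⟩
    apply hne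
    have : c' = (g, t) := by
      have : c'.1 = g := by rw [he1, hdh]
      exact Prod.ext this (Fin.ext (by rw [he2, hds]))
    rwa [this] at hc'
  -- there are `cap` many such dummies
  obtain ⟨D, hDcard, hDmem⟩ := exists_dums (qp := qp) (qm := qm) g t.val 0
    (cap 2 qp qm (g, t)) ht (by
      intro i hi
      simp only [cap] at hi
      constructor
      · simp only [zero_add]
        split at hi
        · exact hi
        · exact lt_of_lt_of_le hi (hq g)
      · intro h2
        simp only [zero_add]
        rw [if_neg (by omega)] at hi
        exact hi)
  have hsub : D ⊆ dumTo M (g, t) := by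
    intro d hd
    obtain ⟨h1, h2, -⟩ := hDmem d hd
    exact mem_dumTo.2 (hmatch d h1 h2)
  have := card_le_card hsub
  rw [hDcard] at this
  have := mset_card M (g, t)
  omega

end Stable

section Counts

variable (M : Res R H 2 qp qm → Option (Hos H 2 qm))

/-- Dummies of `g` at level `t`. -/
noncomputable def dumOfLvl (qp qm : H → ℕ) (g : H) (t : Fin (ell H 2 qm)) :
    Finset (Dummy H 2 qp qm) := univ.filter fun d => d.h = g ∧ d.1.2.1 = t

lemma lvl_default : 0 < ell H 2 qm := by have := two_le_ell (H := H) (qm := qm); omega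

lemma msetO_card_eq_sum (g : H) :
    (msetO (mapToG M) g).card = ∑ t : Fin (ell H 2 qm), (origs M (g, t)).card := by
  classical
  have hfib := Finset.card_eq_sum_card_fiberwise
    (f := fun r : R => ((M (Sum.inl r)).map Prod.snd).getD ⟨0, lvl_default (qm := qm)⟩)
    (s := msetO (mapToG M) g) (t := univ) (fun x _ => mem_univ _)
  rw [hfib]
  refine Finset.sum_congr rfl fun t _ => ?_
  congr 1
  ext r
  simp only [mem_filter, mem_msetO_map, origs, mem_univ, true_and]
  constructor
  · rintro ⟨⟨t', ht'⟩, hf⟩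
    rw [ht'] at hf
    replace hf : t' = t := hf
    rwa [hf] at ht'
  · intro h
    refine ⟨⟨t, h⟩, ?_⟩
    rw [h]
    rfl

lemma dums_card_eq_sum (g : H) :
    (univ.filter fun d : Dummy H 2 qp qm => d.h = g).card =
      ∑ t : Fin (ell H 2 qm), (dumOfLvl qp qm g t).card := by
  classical
  have hfib := Finset.card_eq_sum_card_fiberwise
    (f := fun d : Dummy H 2 qp qm => d.1.2.1)
    (s := univ.filter fun d : Dummy H 2 qp qm => d.h = g) (t := univ) (fun x _ => mem_univ _)
  rw [hfib]
  refine Finset.sum_congr rfl fun t _ => ?_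
  congr 1
  ext d
  simp [dumOfLvl]

lemma matched_dums_le (hM : isMatchingRed 2 qp qm E M) (g : H) :
    ∑ t : Fin (ell H 2 qm), (dumTo M (g, t)).card ≤
      (univ.filter fun d : Dummy H 2 qp qm => d.h = g).card := by
  classical
  have hfib := Finset.card_eq_sum_card_fiberwise
    (f := fun d : Dummy H 2 qp qm => ((M (Sum.inr d)).map Prod.snd).getD ⟨0, lvl_default (qm := qm)⟩)
    (s := univ.filter fun d : Dummy H 2 qp qm => ∃ t, M (Sum.inr d) = some (g, t))
    (t := univ) (fun x _ => mem_univ _)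
  have heq : ∀ t : Fin (ell H 2 qm),
      ((univ.filter fun d : Dummy H 2 qp qm => ∃ t', M (Sum.inr d) = some (g, t')).filter
        (fun d => ((M (Sum.inr d)).map Prod.snd).getD ⟨0, lvl_default (qm := qm)⟩ = t)) =
      dumTo M (g, t) := by
    intro t
    ext d
    simp only [mem_filter, mem_univ, true_and, dumTo]
    constructor
    · rintro ⟨⟨t', ht'⟩, hf⟩
      rw [ht'] at hf
      replace hf : t' = t := hf
      rwa [hf] at ht'
    · intro h
      refine ⟨⟨t, h⟩, ?_⟩
      rw [h]
      rfl
  calc ∑ t : Fin (ell H 2 qm), (dumTo M (g, t)).card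
      = ∑ t : Fin (ell H 2 qm),
          ((univ.filter fun d : Dummy H 2 qp qm => ∃ t', M (Sum.inr d) = some (g, t')).filter
            (fun d => ((M (Sum.inr d)).map Prod.snd).getD ⟨0, lvl_default (qm := qm)⟩ = t)).card := by
        exact Finset.sum_congr rfl fun t _ => by rw [heq t]
    _ = (univ.filter fun d : Dummy H 2 qp qm => ∃ t, M (Sum.inr d) = some (g, t)).card := hfib.symm
    _ ≤ (univ.filter fun d : Dummy H 2 qp qm => d.h = g).card := by
        apply card_le_card
        intro d hd
        simp only [mem_filter, mem_univ, true_and] at hd ⊢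
        obtain ⟨t, ht⟩ := hd
        exact (dum_lv M hM ht).1

lemma dums_at_le (hq : ∀ h, qm h ≤ qp h) (g : H) (t : Fin (ell H 2 qm))
    (ht : t.val ≤ ell H 2 qm - 2) :
    (dumOfLvl qp qm g t).card ≤ cap 2 qp qm (g, t) := by
  classical
  have key : (dumOfLvl qp qm g t).card ≤ (Finset.range (cap 2 qp qm (g, t))).card := by
    refine Finset.card_le_card_of_injOn (fun d => d.i) ?_ ?_
    · intro d hd
      simp only [dumOfLvl, mem_coe, mem_filter, mem_univ, true_and] at hd
      have hii : d.i < qp d.1.1 := d.1.2.2.isLt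
      have hh : d.1.1 = g := hd.1
      have hds : d.s = t.val := by rw [show d.s = d.1.2.1.val from rfl, hd.2]
      simp only [mem_coe, mem_range, cap]
      by_cases h2 : t.val < 2
      · rw [if_pos h2]
        exact lt_of_lt_of_eq hii (congrArg qp hh)
      · rw [if_neg h2]
        exact lt_of_lt_of_eq (d.2.2 (by omega)) (congrArg qm hh)
    · intro d1 h1 d2 h2 hii
      simp only [dumOfLvl, mem_coe, mem_filter, mem_univ, true_and] at h1 h2
      refine dummy_ext (by rw [h1.1, h2.1]) ?_ hii
      rw [show d1.s = d1.1.2.1.val from rfl, show d2.s = d2.1.2.1.val from rfl, h1.2, h2.2]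
  simpa using key

lemma dums_at_top (g : H) (t : Fin (ell H 2 qm)) (ht : t.val = ell H 2 qm - 1) :
    dumOfLvl qp qm g t = ∅ := by
  classical
  ext d
  simp only [dumOfLvl, mem_filter, mem_univ, true_and, Finset.notMem_empty, iff_false]
  rintro ⟨-, hd⟩
  have h1 : d.s ≤ ell H 2 qm - 2 := d.2.1
  have h2 : d.s = t.val := by rw [show d.s = d.1.2.1.val from rfl, hd]
  have := two_le_ell (H := H) (qm := qm)
  omega

/-- Key counting fact: the top copy of `g` has at most `|M(g)|` residents. -/
lemma top_le_n (hq : ∀ h, qm h ≤ qp h) (hM : isMatchingRed 2 qp qm E M)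
    (hB : ∀ x hs, ¬ blocksRed 2 qp qm E rankR rankH M x hs) (g : H)
    (top : Fin (ell H 2 qm)) (htop : top.val = ell H 2 qm - 1) :
    (mset M (g, top)).card ≤ (msetO (mapToG M) g).card := by
  classical
  have hell := two_le_ell (H := H) (qm := qm)
  have e0 : ∀ t : Fin (ell H 2 qm),
      (mset M (g, t)).card = (origs M (g, t)).card + (dumTo M (g, t)).card :=
    fun t => mset_card M (g, t)
  have e1 := msetO_card_eq_sum M g
  have e2 := dums_card_eq_sum (qp := qp) (qm := qm) g
  have e3 := matched_dums_le M hM g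
  have e4 : ∀ t : Fin (ell H 2 qm), t ≠ top →
      (dumOfLvl qp qm g t).card ≤ (mset M (g, t)).card := by
    intro t hne
    have htv : t.val ≤ ell H 2 qm - 2 := by
      have := t.isLt
      have : t.val ≠ ell H 2 qm - 1 := fun h => hne (Fin.ext (by rw [h, htop]))
      omega
    exact le_trans (dums_at_le hq g t htv) (copy_full M hq hM hB g t htv)
  have e5 : (dumOfLvl qp qm g top).card = 0 := by rw [dums_at_top g top htop]; simp
  -- sum splitting
  have s1 : ∑ t ∈ univ.erase top, (dumOfLvl qp qm g t).card + (dumOfLvl qp qm g top).card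
      = ∑ t : Fin (ell H 2 qm), (dumOfLvl qp qm g t).card :=
    Finset.sum_erase_add _ _ (mem_univ top)
  have s2 : ∑ t ∈ univ.erase top, (mset M (g, t)).card + (mset M (g, top)).card
      = ∑ t : Fin (ell H 2 qm), (mset M (g, t)).card :=
    Finset.sum_erase_add _ _ (mem_univ top)
  have s3 : ∑ t ∈ univ.erase top, (dumOfLvl qp qm g t).card ≤
      ∑ t ∈ univ.erase top, (mset M (g, t)).card :=
    Finset.sum_le_sum (fun t htmem => e4 t (Finset.ne_of_mem_erase htmem))
  have s4 : ∑ t : Fin (ell H 2 qm), (mset M (g, t)).card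
      = ∑ t : Fin (ell H 2 qm), (origs M (g, t)).card
        + ∑ t : Fin (ell H 2 qm), (dumTo M (g, t)).card := by
    rw [← Finset.sum_add_distrib]
    exact Finset.sum_congr rfl fun t _ => e0 t
  omega

end Counts

section Struct

variable (M : Res R H 2 qp qm → Option (Hos H 2 qm))

lemma prefHos_of_class_lt {c : Hos H 2 qm} {x y : Res R H 2 qp qm}
    (h : hclass c x < hclass c y) : prefHos 2 qp qm rankH c x y := Or.inl h

lemma prefRes_inl {r : R} {a b : Hos H 2 qm} (h : b.2.val < a.2.val) :
    prefRes 2 qp qm rankR (Sum.inl r) a b := Or.inl h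

lemma edge_inl {r : R} {c : Hos H 2 qm} (h : E r c.1) :
    edge 2 qp qm E (Sum.inl r) c := h

lemma capable_ge (hq : ∀ h, qm h ≤ qp h) (g : H) (s : ℕ) (hs2 : s ≤ ell H 2 qm - 2) :
    (if s = 0 then qp g else qm g) ≤ (capa qp qm g s).card := by
  classical
  obtain ⟨D, hc, hmem⟩ := exists_dums (qp := qp) (qm := qm) g s
    (if s = 1 then qp g - qm g else 0) (if s = 0 then qp g else qm g) hs2 (by
      intro i hi
      have hqg := hq g
      constructor
      · split_ifs at hi ⊢ <;> omega
      · intro h2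
        split_ifs at hi ⊢ <;> omega)
  have hsub : D ⊆ capa qp qm g s := by
    intro d hd
    obtain ⟨h1, h2, h3⟩ := hmem d hd
    refine mem_capa.2 ⟨h1, h2, fun hs1 => ?_⟩
    rw [hs1, if_pos rfl] at h3
    exact h3
  calc (if s = 0 then qp g else qm g) = D.card := hc.symm
    _ ≤ _ := card_le_card hsub

/-- Above the level of a matched original resident of `g`, copies of `g` are full and
contain no own-level dummies. -/
lemma above_full (hM : isMatchingRed 2 qp qm E M)
    (hB : ∀ x hs, ¬ blocksRed 2 qp qm E rankR rankH M x hs)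
    {g : H} {t0 t : Fin (ell H 2 qm)} {r : R}
    (hr : M (Sum.inl r) = some (g, t0)) (ht : t0.val < t.val) :
    cap 2 qp qm (g, t) ≤ (mset M (g, t)).card ∧
      ∀ d ∈ dumTo M (g, t), d.s ≠ t.val := by
  have hE : E r g := orig_E M hM hr
  have h := noblock M hB (x := Sum.inl r) (c := (g, t)) (edge_inl hE) (by
    intro c' hc'
    have hc'' : c' = (g, t0) := by rw [hr] at hc'; exact (Option.some.inj hc').symm
    subst hc''
    exact prefRes_inl ht)
  refine ⟨h.1, fun d hd hds => ?_⟩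
  have hdh : d.h = g := (dum_lv M hM (mem_dumTo.1 hd)).1
  exact h.2 (Sum.inr d) (mem_mset.2 (mem_dumTo.1 hd))
    (prefHos_of_class_lt (by erw [hclass_inl, hclass_inr_two hdh hds]; omega))

/-- If an original resident is matched to `g^{s+1}`, every dummy of `g` at level `s`
acceptable to `g^{s+1}` is matched. -/
lemma capable_matched (hM : isMatchingRed 2 qp qm E M)
    (hB : ∀ x hs, ¬ blocksRed 2 qp qm E rankR rankH M x hs)
    {g : H} {s : ℕ} {t : Fin (ell H 2 qm)} (ht : t.val = s + 1)
    {r : R} (hr : M (Sum.inl r) = some (g, t)) :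
    ∀ d ∈ capa qp qm g s, ∃ c, M (Sum.inr d) = some c := by
  intro d hd
  obtain ⟨h1, h2, h3⟩ := mem_capa.1 hd
  by_contra hnone
  push_neg at hnone
  refine hB (Sum.inr d) (g, t) ⟨⟨h1, Or.inr ⟨by show t.val = d.s + 1; omega, ?_⟩⟩, ?_, ?_⟩
  · rintro ⟨hds1, hilt⟩
    have : s = 1 := by omega
    have := h3 this
    simp only at hilt
    omega
  · intro c' hc'
    exact absurd hc' (hnone c')
  · refine Or.inr ⟨Sum.inl r, mem_mset.2 hr, prefHos_of_class_lt ?_⟩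
    erw [hclass_inl, hclass_inr_zero h1 (by show 1 ≤ t.val; omega) (by show d.s = t.val - 1; omega)]
    omega

/-- If a copy of `g` contains an own-level dummy, every acceptable resident of `g` is
matched at a level at least that of this copy. -/
lemma resident_high (hM : isMatchingRed 2 qp qm E M)
    (hB : ∀ x hs, ¬ blocksRed 2 qp qm E rankR rankH M x hs)
    {g : H} {u : Fin (ell H 2 qm)} {d : Dummy H 2 qp qm}
    (hd : M (Sum.inr d) = some (g, u)) (hds : d.s = u.val)
    {r : R} (hEr : E r g) :
    ∃ (b : H) (t : Fin (ell H 2 qm)), M (Sum.inl r) = some (b, t) ∧ u.val ≤ t.val := by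
  by_contra hcon
  push_neg at hcon
  have hdh : d.h = g := (dum_lv M hM hd).1
  refine hB (Sum.inl r) (g, u) ⟨edge_inl hEr, ?_, Or.inr ⟨Sum.inr d, mem_mset.2 hd,
    prefHos_of_class_lt (by erw [hclass_inl, hclass_inr_two hdh hds]; omega)⟩⟩
  intro c' hc'
  exact prefRes_inl (hcon c'.1 c'.2 (hc'.trans rfl))

/-- If a copy is undersubscribed, every acceptable resident is matched at a level at
least that of this copy. -/
lemma resident_top
    (hB : ∀ x hs, ¬ blocksRed 2 qp qm E rankR rankH M x hs)
    {c : Hos H 2 qm} (hcap : (mset M c).card < cap 2 qp qm c)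
    {r : R} (hEr : E r c.1) :
    ∃ (b : H) (t : Fin (ell H 2 qm)), M (Sum.inl r) = some (b, t) ∧ c.2.val ≤ t.val := by
  by_contra hcon
  push_neg at hcon
  refine hB (Sum.inl r) c ⟨edge_inl hEr, ?_, Or.inl hcap⟩
  intro c' hc'
  exact prefRes_inl (hcon c'.1 c'.2 (hc'.trans rfl))

/-- Original residents of `g` occupy at most two adjacent levels. -/
lemma span (hq : ∀ h, qm h ≤ qp h) (hM : isMatchingRed 2 qp qm E M)
    (hB : ∀ x hs, ¬ blocksRed 2 qp qm E rankR rankH M x hs)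
    {g : H} {t1 t2 : Fin (ell H 2 qm)} {r1 r2 : R}
    (h1 : M (Sum.inl r1) = some (g, t1)) (h2 : M (Sum.inl r2) = some (g, t2))
    (hlt : t1.val + 2 ≤ t2.val) : False := by
  classical
  have hell := two_le_ell (H := H) (qm := qm)
  have ht2 := t2.isLt
  set s := t2.val - 1 with hs
  clear_value s
  have hs2 : s ≤ ell H 2 qm - 2 := by omega
  have hcap : qm g ≤ (capa qp qm g s).card := by
    have := capable_ge (qp := qp) hq g s hs2
    rwa [if_neg (by omega)] at this
  have hsub : capa qp qm g s ⊆ dumTo M (g, t2) := by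
    intro d hd
    obtain ⟨hdh, hds, -⟩ := mem_capa.1 hd
    obtain ⟨c, hc⟩ := capable_matched M hM hB (t := t2) (by omega) h2 d hd
    have hlv := dum_lv M hM hc
    have hc1 : c.1 = g := hlv.1.symm.trans hdh
    rcases hlv.2 with hA | hA
    · exfalso
      have hc' : M (Sum.inr d) = some (g, c.2) := by
        rwa [show (g, c.2) = c from Prod.ext hc1.symm rfl]
      have hAx : c.2.val = s := by omega
      have h_t1c : t1.val < c.2.val := by omega
      have hneq := (above_full M hM hB h1 (t := c.2) h_t1c).2 d (mem_dumTo.2 hc')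
      exact hneq (by omega)
    · have : c = (g, t2) := Prod.ext hc1 (Fin.ext (show c.2.val = t2.val by omega))
      exact mem_dumTo.2 (this ▸ hc)
  have hcard := card_le_card hsub
  have hm := mset_card M (g, t2)
  have hcapb := hM.2 (g, t2)
  have horig : 1 ≤ (origs M (g, t2)).card := card_pos.2 ⟨r2, mem_origs.2 h2⟩
  have hcapv : cap 2 qp qm (g, t2) = qm g := by
    rw [cap_pair, if_neg (by omega)]
  omega

/-- The total number of original residents matched to `g` is at most the capacity of
the lowest active copy of `g`. -/
lemma total_bound (hq : ∀ h, qm h ≤ qp h) (hM : isMatchingRed 2 qp qm E M)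
    (hB : ∀ x hs, ¬ blocksRed 2 qp qm E rankR rankH M x hs)
    {g : H} {tm : Fin (ell H 2 qm)} {rm : R}
    (hrm : M (Sum.inl rm) = some (g, tm))
    (hmin : ∀ (t : Fin (ell H 2 qm)) (r : R), M (Sum.inl r) = some (g, t) → tm.val ≤ t.val) :
    (msetO (mapToG M) g).card ≤ cap 2 qp qm (g, tm) := by
  classical
  have hell := two_le_ell (H := H) (qm := qm)
  rw [msetO_card_eq_sum]
  have hzero : ∀ t : Fin (ell H 2 qm), t.val ≠ tm.val → t.val ≠ tm.val + 1 →
      (origs M (g, t)).card = 0 := by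
    intro t hne1 hne2
    rw [Finset.card_eq_zero]
    by_contra hne
    obtain ⟨r, hr⟩ := Finset.nonempty_iff_ne_empty.2 hne
    have hr' := mem_origs.1 hr
    have hge := hmin t r hr'
    exact span M hq hM hB hrm hr' (by omega)
  have hcap_tm : (origs M (g, tm)).card + (dumTo M (g, tm)).card ≤ cap 2 qp qm (g, tm) := by
    have := mset_card M (g, tm); have := hM.2 (g, tm); omega
  by_cases htop : tm.val + 1 < ell H 2 qm
  · set t' : Fin (ell H 2 qm) := ⟨tm.val + 1, htop⟩ with ht'def
    have ht'ne : t' ≠ tm := by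
      intro h
      have := congrArg Fin.val h
      simp [ht'def] at this
    have hsum : ∑ t : Fin (ell H 2 qm), (origs M (g, t)).card ≤
        (origs M (g, tm)).card + (origs M (g, t')).card := by
      rw [← Finset.sum_erase_add _ _ (mem_univ tm)]
      have h2 : ∑ t ∈ univ.erase tm, (origs M (g, t)).card = (origs M (g, t')).card := by
        rw [← Finset.sum_erase_add _ _ (Finset.mem_erase.2 ⟨ht'ne, mem_univ t'⟩)]
        have h3 : ∑ t ∈ (univ.erase tm).erase t', (origs M (g, t)).card = 0 := by
          apply Finset.sum_eq_zero
          intro t htmem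
          have htne1 : t ≠ t' := (Finset.mem_erase.1 htmem).1
          have htne2 : t ≠ tm := (Finset.mem_erase.1 (Finset.mem_erase.1 htmem).2).1
          refine hzero t (fun h => htne2 (Fin.ext h)) (fun h => htne1 (Fin.ext h))
        omega
      omega
    by_cases hempty : (origs M (g, t')).card = 0
    · omega
    · obtain ⟨r', hr'⟩ := Finset.card_pos.1 (Nat.pos_of_ne_zero hempty)
      have hr'' := mem_origs.1 hr'
      have hcap_t' : (origs M (g, t')).card + (dumTo M (g, t')).card
          ≤ cap 2 qp qm (g, t') := by
        have := mset_card M (g, t'); have := hM.2 (g, t'); omega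
      have he3 : cap 2 qp qm (g, t') ≤ (capa qp qm g tm.val).card := by
        have := capable_ge (qp := qp) hq g tm.val (by omega)
        have hv : cap 2 qp qm (g, t') = (if tm.val = 0 then qp g else qm g) := by
          rw [cap_pair]
          by_cases h0 : tm.val = 0
          · rw [if_pos (by simp [ht'def]; omega), if_pos h0]
          · rw [if_neg (by simp [ht'def]; omega), if_neg h0]
        omega
      have he4 : (capa qp qm g tm.val).card ≤
          (dumTo M (g, tm)).card + (dumTo M (g, t')).card := by
        have hsub : capa qp qm g tm.val ⊆ dumTo M (g, tm) ∪ dumTo M (g, t') := by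
          intro d hd
          obtain ⟨hdh, hds, -⟩ := mem_capa.1 hd
          obtain ⟨c, hc⟩ := capable_matched M hM hB (t := t') (by simp [ht'def, hds]) hr'' d hd
          have hlv := dum_lv M hM hc
          have hc1 : c.1 = g := hlv.1.symm.trans hdh
          rcases hlv.2 with hA | hA
          · have : c = (g, tm) := Prod.ext hc1 (Fin.ext (show c.2.val = tm.val by omega))
            exact Finset.mem_union_left _ (mem_dumTo.2 (this ▸ hc))
          · have : c = (g, t') := Prod.ext hc1 (Fin.ext (show c.2.val = tm.val + 1 by omega))
            exact Finset.mem_union_right _ (mem_dumTo.2 (this ▸ hc))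
        exact le_trans (card_le_card hsub) (Finset.card_union_le _ _)
      omega
  · have hone : ∀ t : Fin (ell H 2 qm), t ≠ tm → (origs M (g, t)).card = 0 := by
      intro t ht
      have := t.isLt
      refine hzero t (fun h => ht (Fin.ext h)) (by omega)
    rw [Finset.sum_eq_single_of_mem tm (mem_univ _) (fun t _ h => hone t h)]
    omega

/-- Descent: if an original resident is matched to `g` at level `≥ 3`, every acceptable
resident of `g` is matched at a level at least one lower. -/
lemma descent (hq : ∀ h, qm h ≤ qp h) (hM : isMatchingRed 2 qp qm E M)
    (hB : ∀ x hs, ¬ blocksRed 2 qp qm E rankR rankH M x hs)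
    {g : H} {t0 : Fin (ell H 2 qm)} {r0 : R} (hr0 : M (Sum.inl r0) = some (g, t0))
    (h3 : 3 ≤ t0.val) {r : R} (hEr : E r g) :
    ∃ (b : H) (t : Fin (ell H 2 qm)), M (Sum.inl r) = some (b, t) ∧ t0.val - 1 ≤ t.val := by
  classical
  have hell := two_le_ell (H := H) (qm := qm)
  have ht0 := t0.isLt
  set s := t0.val - 1 with hs
  clear_value s
  have hcap : qm g ≤ (capa qp qm g s).card := by
    have := capable_ge (qp := qp) hq g s (by omega)
    rwa [if_neg (by omega)] at this
  have hNotAll : ¬ capa qp qm g s ⊆ dumTo M (g, t0) := by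
    intro hsub
    have hcard := card_le_card hsub
    have hm := mset_card M (g, t0)
    have hcapb := hM.2 (g, t0)
    have horig : 1 ≤ (origs M (g, t0)).card := card_pos.2 ⟨r0, mem_origs.2 hr0⟩
    have hcapv : cap 2 qp qm (g, t0) = qm g := by
      rw [cap_pair, if_neg (by omega)]
    omega
  obtain ⟨d, hd, hdnot⟩ := Finset.not_subset.1 hNotAll
  obtain ⟨hdh, hds, -⟩ := mem_capa.1 hd
  obtain ⟨c, hc⟩ := capable_matched M hM hB (t := t0) (by omega) hr0 d hd
  have hlv := dum_lv M hM hc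
  have hc1 : c.1 = g := hlv.1.symm.trans hdh
  have hcs : c.2.val = s := by
    rcases hlv.2 with hA | hA
    · omega
    · exfalso
      exact hdnot (mem_dumTo.2 (by
        rwa [show c = (g, t0) from Prod.ext hc1 (Fin.ext (show c.2.val = t0.val by omega))] at hc))
  have hc' : M (Sum.inr d) = some (g, c.2) := by
    rwa [show (g, c.2) = c from Prod.ext hc1.symm rfl]
  obtain ⟨b, t, hbt, hle⟩ := resident_high M hM hB hc' (by omega) hEr
  exact ⟨b, t, hbt, by omega⟩

end Struct

section Endgame

variable (M : Res R H 2 qp qm → Option (Hos H 2 qm)) (N : R → Option H)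

/-- One expansion step of the set of reachable hospitals. -/
noncomputable def Snext (S : Finset H) : Finset H :=
  S ∪ univ.filter fun b => ∃ a ∈ S, ∃ r, N r = some a ∧ ∃ t, M (Sum.inl r) = some (b, t)

/-- Iterated reachable sets, starting from `{g0}`. -/
noncomputable def Sseq (g0 : H) : ℕ → Finset H
  | 0 => {g0}
  | k + 1 => Snext M N (Sseq g0 k)

/-- Existence of a minimal active level of `g`. -/
lemma exists_min_witness {g : H} {r0 : R} {t0 : Fin (ell H 2 qm)}
    (h0 : M (Sum.inl r0) = some (g, t0)) :
    ∃ (tm : Fin (ell H 2 qm)) (rm : R), M (Sum.inl rm) = some (g, tm) ∧ tm.val ≤ t0.val ∧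
      ∀ (t : Fin (ell H 2 qm)) (r : R), M (Sum.inl r) = some (g, t) → tm.val ≤ t.val := by
  classical
  have hTne : (univ.filter fun t : Fin (ell H 2 qm) => (origs M (g, t)).Nonempty).Nonempty :=
    ⟨t0, mem_filter.2 ⟨mem_univ _, ⟨r0, mem_origs.2 h0⟩⟩⟩
  set tm := (univ.filter fun t : Fin (ell H 2 qm) => (origs M (g, t)).Nonempty).min' hTne
    with htm
  have htmm := Finset.min'_mem _ hTne
  rw [← htm] at htmm
  obtain ⟨rm, hrm⟩ := (mem_filter.1 htmm).2
  have hmin : ∀ (t : Fin (ell H 2 qm)) (r : R), M (Sum.inl r) = some (g, t) → tm.val ≤ t.val := by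
    intro t r hr
    have : tm ≤ t := by
      rw [htm]
      exact Finset.min'_le _ _ (mem_filter.2 ⟨mem_univ _, ⟨r, mem_origs.2 hr⟩⟩)
    exact Fin.le_def.1 this
  exact ⟨tm, rm, mem_origs.1 hrm, hmin t0 r0 h0, hmin⟩

/-- Upper quota bound. -/
lemma n_le_qp (hq : ∀ h, qm h ≤ qp h) (hM : isMatchingRed 2 qp qm E M)
    (hB : ∀ x hs, ¬ blocksRed 2 qp qm E rankR rankH M x hs) (g : H) :
    (msetO (mapToG M) g).card ≤ qp g := by
  classical
  by_cases hempty : (msetO (mapToG M) g).card = 0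
  · omega
  · obtain ⟨r, hr⟩ := Finset.card_pos.1 (Nat.pos_of_ne_zero hempty)
    obtain ⟨t0, h0⟩ := mem_msetO_map.1 hr
    obtain ⟨tm, rm, hrm, -, hmin⟩ := exists_min_witness M h0
    have := total_bound M hq hM hB hrm hmin
    rw [cap_pair] at this
    split_ifs at this
    · exact this
    · exact le_trans this (hq g)

/-- If `g` has an original resident at level `≥ 3`, then `|M(g)| ≤ q⁻(g)`. -/
lemma n_le_qm (hq : ∀ h, qm h ≤ qp h) (hM : isMatchingRed 2 qp qm E M)
    (hB : ∀ x hs, ¬ blocksRed 2 qp qm E rankR rankH M x hs)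
    {g : H} {t0 : Fin (ell H 2 qm)} {r0 : R} (h0 : M (Sum.inl r0) = some (g, t0))
    (h3 : 3 ≤ t0.val) : (msetO (mapToG M) g).card ≤ qm g := by
  classical
  obtain ⟨tm, rm, hrm, hle, hmin⟩ := exists_min_witness M h0
  have h2 : 2 ≤ tm.val := by
    by_contra hlow
    exact span M hq hM hB hrm h0 (by omega)
  have := total_bound M hq hM hB hrm hmin
  rwa [cap_pair, if_neg (by omega)] at this

/-- The main lower-quota argument: no hospital can be deficient. -/
lemma no_deficiency (hq : ∀ h, qm h ≤ qp h) (hM : isMatchingRed 2 qp qm E M)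
    (hB : ∀ x hs, ¬ blocksRed 2 qp qm E rankR rankH M x hs)
    (hN : feasibleO E qp qm N) (g0 : H)
    (hdef : (msetO (mapToG M) g0).card < qm g0) : False := by
  classical
  have hell := two_le_ell (H := H) (qm := qm)
  set Q := ∑ h, qm h with hQ
  have hQ1 : 1 ≤ qm g0 := by omega
  have hQpos : qm g0 ≤ Q := Finset.single_le_sum (f := qm) (fun _ _ => Nat.zero_le _) (mem_univ g0)
  have hellQ : ell H 2 qm = Q + 2 := by rw [hQ]; simp only [ell]; omega
  set top : Fin (ell H 2 qm) := ⟨ell H 2 qm - 1, by omega⟩ with htopdef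
  have htopv : top.val = ell H 2 qm - 1 := rfl
  have htopu : (mset M (g0, top)).card < cap 2 qp qm (g0, top) := by
    have h1 := top_le_n M hq hM hB g0 top htopv
    have hcapv : cap 2 qp qm (g0, top) = qm g0 := by
      rw [cap_pair, if_neg (by omega)]
    omega
  have hnb : ∀ r : R, E r g0 → ∃ (b : H) (t : Fin (ell H 2 qm)),
      M (Sum.inl r) = some (b, t) ∧ ell H 2 qm - 1 ≤ t.val := by
    intro r hEr
    obtain ⟨b, t, hbt, hle⟩ := resident_top M hB (c := (g0, top)) htopu hEr
    exact ⟨b, t, hbt, hle⟩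
  -- invariant on the reachable sets
  have inv : ∀ k, k ≤ Q → ∀ a ∈ Sseq M N g0 k, a = g0 ∨
      ∃ (r : R) (t : Fin (ell H 2 qm)), M (Sum.inl r) = some (a, t) ∧
        ell H 2 qm - k ≤ t.val := by
    intro k
    induction k with
    | zero =>
      intro _ a ha
      left
      simpa [Sseq] using ha
    | succ k ih =>
      intro hk a ha
      rw [show Sseq M N g0 (k + 1) = Snext M N (Sseq M N g0 k) from rfl, Snext] at ha
      rcases Finset.mem_union.1 ha with ha | ha
      · rcases ih (by omega) a ha with h | ⟨r, t, h1, h2⟩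
        · exact Or.inl h
        · exact Or.inr ⟨r, t, h1, by omega⟩
      · simp only [mem_filter, mem_univ, true_and] at ha
        obtain ⟨b, hb, r, hNr, t, hMr⟩ := ha
        have hEr : E r b := hN.1 r b hNr
        rcases ih (by omega) b hb with rfl | ⟨r0, t0, h0, hlv0⟩
        · obtain ⟨b', t', h', hv'⟩ := hnb r hEr
          have heq := Option.some.inj (h'.symm.trans hMr)
          have hteq' : t' = t := congrArg Prod.snd heq
          have hteq : t'.val = t.val := congrArg Fin.val hteq'
          exact Or.inr ⟨r, t, hMr, by omega⟩
        · obtain ⟨b', t', h', hv'⟩ := descent M hq hM hB h0 (by omega) hEr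
          have heq := Option.some.inj (h'.symm.trans hMr)
          have hteq' : t' = t := congrArg Prod.snd heq
          have hteq : t'.val = t.val := congrArg Fin.val hteq'
          exact Or.inr ⟨r, t, hMr, by omega⟩
  -- members of the reachable sets have positive lower quota
  have hpos : ∀ k, k ≤ Q → ∀ a ∈ Sseq M N g0 k, 1 ≤ qm a := by
    intro k hk a ha
    rcases inv k hk a ha with rfl | ⟨r, t, h1, h2⟩
    · exact hQ1
    · have hcard : 0 < (mset M (a, t)).card := card_pos.2 ⟨Sum.inl r, mem_mset.2 h1⟩
      have hcap := hM.2 (a, t)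
      rw [cap_pair, if_neg (by omega)] at hcap
      omega
  -- the sequence stabilizes before step Q
  have hstab : ∃ k, k < Q ∧ Sseq M N g0 (k + 1) = Sseq M N g0 k := by
    by_contra hno
    push_neg at hno
    have hgrow : ∀ k, k ≤ Q → k + 1 ≤ (Sseq M N g0 k).card := by
      intro k
      induction k with
      | zero => intro _; simp [Sseq]
      | succ k ih =>
        intro hk
        have h1 := ih (by omega)
        have hsub : Sseq M N g0 k ⊆ Sseq M N g0 (k + 1) := Finset.subset_union_left
        have hlt : (Sseq M N g0 k).card < (Sseq M N g0 (k + 1)).card :=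
          Finset.card_lt_card (ssubset_of_subset_of_ne hsub (Ne.symm (hno k (by omega))))
        omega
    have hbig := hgrow Q le_rfl
    have hsubQ : Sseq M N g0 Q ⊆ univ.filter fun a => 1 ≤ qm a := fun a ha =>
      mem_filter.2 ⟨mem_univ a, hpos Q le_rfl a ha⟩
    have hsmall : (univ.filter fun a : H => 1 ≤ qm a).card ≤ Q := by
      calc (univ.filter fun a : H => 1 ≤ qm a).card
          = ∑ a ∈ univ.filter (fun a : H => 1 ≤ qm a), 1 := by rw [Finset.card_eq_sum_ones]
        _ ≤ ∑ a ∈ univ.filter (fun a : H => 1 ≤ qm a), qm a :=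
            Finset.sum_le_sum (fun a ha => (mem_filter.1 ha).2)
        _ ≤ ∑ a, qm a := Finset.sum_le_sum_of_subset (filter_subset _ _)
    have := card_le_card hsubQ
    omega
  obtain ⟨k0, hk0, hfix⟩ := hstab
  have hg0mem : ∀ k, g0 ∈ Sseq M N g0 k := by
    intro k
    induction k with
    | zero => simp [Sseq]
    | succ k ih =>
      rw [show Sseq M N g0 (k + 1) = Snext M N (Sseq M N g0 k) from rfl, Snext]
      exact Finset.mem_union_left _ ih
  have hclosed : ∀ b, (∃ a ∈ Sseq M N g0 k0, ∃ r, N r = some a ∧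
      ∃ t, M (Sum.inl r) = some (b, t)) → b ∈ Sseq M N g0 k0 := by
    intro b hb
    have h1 : b ∈ Sseq M N g0 (k0 + 1) := by
      rw [show Sseq M N g0 (k0 + 1) = Snext M N (Sseq M N g0 k0) from rfl, Snext]
      exact Finset.mem_union_right _ (mem_filter.2 ⟨mem_univ b, hb⟩)
    rwa [hfix] at h1
  have hwit : ∀ a ∈ Sseq M N g0 k0, a ≠ g0 → ∃ (r : R) (t : Fin (ell H 2 qm)),
      M (Sum.inl r) = some (a, t) ∧ 3 ≤ t.val := by
    intro a ha hne
    rcases inv k0 (by omega) a ha with h | ⟨r, t, h1, h2⟩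
    · exact absurd h hne
    · exact ⟨r, t, h1, by omega⟩
  have hRNRM : ∀ (r : R) (a : H), a ∈ Sseq M N g0 k0 → N r = some a →
      ∃ b ∈ Sseq M N g0 k0, ∃ t, M (Sum.inl r) = some (b, t) := by
    intro r a haS hNr
    have hEr : E r a := hN.1 r a hNr
    by_cases hag : a = g0
    · subst hag
      obtain ⟨b, t, hbt, -⟩ := hnb r hEr
      exact ⟨b, hclosed b ⟨a, haS, r, hNr, t, hbt⟩, t, hbt⟩
    · obtain ⟨r0, t0, h0, h3⟩ := hwit a haS hag
      obtain ⟨b, t, hbt, -⟩ := descent M hq hM hB h0 (by omega) hEr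
      exact ⟨b, hclosed b ⟨a, haS, r, hNr, t, hbt⟩, t, hbt⟩
  -- final counting
  set S := Sseq M N g0 k0 with hSdef
  set RN := univ.filter (fun r : R => ∃ a ∈ S, N r = some a) with hRN
  set RM := univ.filter (fun r : R => ∃ a ∈ S, ∃ t, M (Sum.inl r) = some (a, t)) with hRM
  have hsubR : RN ⊆ RM := by
    intro r hr
    rw [hRN, mem_filter] at hr
    obtain ⟨-, a, ha, hNr⟩ := hr
    obtain ⟨b, hb, t, hbt⟩ := hRNRM r a ha hNr
    rw [hRM, mem_filter]
    exact ⟨mem_univ r, b, hb, t, hbt⟩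
  have hcardRN : ∑ a ∈ S, (msetO N a).card = RN.card := by
    rw [Finset.card_eq_sum_card_fiberwise (f := fun r => (N r).getD g0) (t := S) (by
      intro r hr
      simp only [hRN, mem_coe, mem_filter] at hr
      obtain ⟨-, a, ha, hNr⟩ := hr
      show (N r).getD g0 ∈ S
      rw [hNr]
      simpa using ha)]
    refine Finset.sum_congr rfl fun a haS => ?_
    congr 1
    ext r
    simp only [hRN, mem_filter, mem_univ, true_and, msetO]
    constructor
    · intro h
      refine ⟨⟨a, haS, h⟩, by rw [h]; simp⟩
    · rintro ⟨⟨a', ha', hNr⟩, hf⟩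
      rw [hNr] at hf
      simp only [Option.getD_some] at hf
      rwa [hf] at hNr
  have hcardRM : ∑ a ∈ S, (msetO (mapToG M) a).card = RM.card := by
    rw [Finset.card_eq_sum_card_fiberwise
      (f := fun r => ((M (Sum.inl r)).map Prod.fst).getD g0) (t := S) (by
        intro r hr
        simp only [hRM, mem_coe, mem_filter] at hr
        obtain ⟨-, a, ha, t, hMr⟩ := hr
        show ((M (Sum.inl r)).map Prod.fst).getD g0 ∈ S
        rw [hMr]
        simpa using ha)]
    refine Finset.sum_congr rfl fun a haS => ?_
    congr 1
    ext r
    constructor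
    · intro h
      have h' := mem_msetO_map.1 h
      obtain ⟨t, ht⟩ := h'
      rw [mem_filter]
      refine ⟨by rw [hRM, mem_filter]; exact ⟨mem_univ r, a, haS, t, ht⟩, by rw [ht]; simp⟩
    · intro h
      rw [mem_filter] at h
      obtain ⟨hrm, hf⟩ := h
      rw [hRM, mem_filter] at hrm
      obtain ⟨-, a', ha', t, hMr⟩ := hrm
      rw [hMr] at hf
      replace hf : a' = a := hf
      refine mem_msetO_map.2 ⟨t, ?_⟩
      rwa [hf] at hMr
  have hlow : ∀ a ∈ S, qm a ≤ (msetO N a).card := fun a _ => (hN.2 a).1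
  have hupp : ∀ a ∈ S, (msetO (mapToG M) a).card ≤ qm a := by
    intro a ha
    by_cases hag : a = g0
    · subst hag; omega
    · obtain ⟨r, t, h1, h3⟩ := hwit a ha hag
      exact n_le_qm M hq hM hB h1 h3
  have hg0S : g0 ∈ S := hg0mem k0
  have hstrict : ∑ a ∈ S, (msetO (mapToG M) a).card < ∑ a ∈ S, qm a :=
    Finset.sum_lt_sum hupp ⟨g0, hg0S, hdef⟩
  have hlower : ∑ a ∈ S, qm a ≤ ∑ a ∈ S, (msetO N a).card := Finset.sum_le_sum hlow
  have hcard := card_le_card hsubR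
  omega

end Endgame

end Aux

end HRLQ
/-- If the HRLQ instance `G` admits a feasible matching, then the matching `map M` of `G`
obtained from any stable matching `M` of the reduced HR instance `G'` is feasible for `G`. -/
theorem statement9 {R H : Type} [Fintype R] [Fintype H]
    (E : R → H → Prop) (rankR : R → H → ℕ) (rankH : H → R → ℕ) (qp qm : H → ℕ)
    (hq : ∀ h, qm h ≤ qp h)
    (M : Res R H 2 qp qm → Option (Hos H 2 qm))
    (hst : stableRed 2 qp qm E rankR rankH M)
    (hex : ∃ N : R → Option H, feasibleO E qp qm N) :
    feasibleO E qp qm (mapToG M) := by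
  obtain ⟨hM, hB⟩ := hst
  obtain ⟨N, hN⟩ := hex
  refine ⟨?_, fun g => ⟨?_, ?_⟩⟩
  · intro r g hr
    obtain ⟨c, hc, rfl⟩ := Option.map_eq_some_iff.1 hr
    exact orig_E M hM hc
  · by_contra hlt
    push_neg at hlt
    exact no_deficiency M N hq hM hB hN g hlt
  · exact n_le_qp M hq hM hB g
end
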